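/- arXiv:2605.10671 — 5 statements merged into one kernel-verified Lean document; each statement's English description precedes it below -/
import Mathlib

section
/- Natural policy gradient is an instance of doubly smoothed policy iteration: let (π_k, θ_k) be an NPG sequence with positive stepsizes (α_k), and set β_0 = 1, β_k = α_k / Σ_{i=0}^k α_i for k ≥ 1, τ = 1/α_0, and define Q̄_0 = 0 and Q̄_{k+1} = (1−β_k) Q̄_k + β_k Q^{π_k}. Then for every k ≥ 0: (i) Q̄_{k+1} = (Σ_{i=0}^k α_i Q^{π_i}) / (Σ_{i=0}^k α_i); (ii) ∏_{j=1}^k (1−β_j) = α_0 / Σ_{i=0}^k α_i; and (iii) for every state s, π_{k+1}(·|s) is the unique maximizer over μ ∈ Δ(A) of μ·Q̄_{k+1}(s) + τ ∏_{j=1}^k (1−β_j) · h(μ), where h is the Shannon entropy. In particular the NPG policy sequence coincides with the DSPI policy sequence with ν = h, these stepsizes, and this τ. -/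
open Finset

noncomputable section

/-- A finite discounted MDP: transition kernel `p`, reward `R` in `[0,1]`,
discount factor `γ ∈ (0,1)`. -/
structure MDP (S A : Type*) [Fintype S] [Fintype A] where
  p : S → A → S → ℝ
  R : S → A → ℝ
  γ : ℝ
  hp : ∀ s a, p s a ∈ stdSimplex ℝ S
  hR : ∀ s a, R s a ∈ Set.Icc (0 : ℝ) 1
  hγ : γ ∈ Set.Ioo (0 : ℝ) 1

variable {S A : Type*} [Fintype S] [Fintype A] [Nonempty S] [Nonempty A]

/-- The Bellman operator `H^π` of a policy `pol`. -/
def bellmanPol (M : MDP S A) (pol : S → A → ℝ) (Q : S → A → ℝ) : S → A → ℝ :=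
  fun s a => M.R s a + M.γ * ∑ s', M.p s a s' * ∑ a', pol s' a' * Q s' a'

/-- The Bellman optimality operator `H`. -/
def bellmanOpt (M : MDP S A) (Q : S → A → ℝ) : S → A → ℝ :=
  fun s a => M.R s a + M.γ * ∑ s', M.p s a s' * (⨆ a', Q s' a')

/-- The sup-norm of a vector in `ℝ^{S×A}`. -/
def supNormQ (Q : S → A → ℝ) : ℝ := ⨆ x : S × A, |Q x.1 x.2|

/-- The sup-norm of a vector in `ℝ^S`. -/
def supNormV (V : S → ℝ) : ℝ := ⨆ s : S, |V s|

/-- The value function `V^π` of a policy `pol` with `Q`-function `Qpol`. -/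
def valueOf (pol : S → A → ℝ) (Qpol : S → A → ℝ) : S → ℝ := fun s => ∑ a, pol s a * Qpol s a

/-- The optimal value function `V*` derived from `Q*`. -/
def Vstar (Qstar : S → A → ℝ) : S → ℝ := fun s => ⨆ a, Qstar s a

/-- The Shannon entropy on the probability simplex. -/
def entropyFn (μ : A → ℝ) : ℝ := -∑ a, μ a * Real.log (μ a)

/-- An NPG sequence: `pol 0` is uniform, `θ 0 = 0`, `θ (k+1) = θ k + α k • Q^{π_k}`,
and `pol (k+1) s` maximizes `μ ↦ μ · θ (k+1) s + h(μ)` over the simplex. -/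
structure NPGSeq (M : MDP S A) (α : ℕ → ℝ) where
  pol : ℕ → S → A → ℝ
  Qpi : ℕ → S → A → ℝ
  θ : ℕ → S → A → ℝ
  hpol : ∀ k s, pol k s ∈ stdSimplex ℝ A
  hQpi : ∀ k, bellmanPol M (pol k) (Qpi k) = Qpi k
  hpol0 : ∀ s a, pol 0 s a = (Fintype.card A : ℝ)⁻¹
  hθ0 : θ 0 = 0
  hθSucc : ∀ k, θ (k + 1) = θ k + α k • Qpi k
  hmax : ∀ k s, ∀ μ ∈ stdSimplex ℝ A,
      ∑ a, μ a * θ (k + 1) s a + entropyFn μ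
        ≤ ∑ a, pol (k + 1) s a * θ (k + 1) s a + entropyFn (pol (k + 1) s)

/-- Strict concavity of the entropy at the midpoint of two distinct simplex points. -/
lemma entropy_midpoint_strict (μ π : A → ℝ)
    (hμ : μ ∈ stdSimplex ℝ A) (hπ : π ∈ stdSimplex ℝ A) (hne : μ ≠ π) :
    (entropyFn μ + entropyFn π) / 2 < entropyFn (fun a => μ a / 2 + π a / 2) := by
  obtain ⟨a0, ha0⟩ : ∃ a, μ a ≠ π a := by
    by_contra h; push_neg at h; exact hne (funext h)
  have hle : ∀ a ∈ Finset.univ (α := A),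
      (μ a / 2 + π a / 2) * Real.log (μ a / 2 + π a / 2)
        ≤ (μ a * Real.log (μ a) + π a * Real.log (π a)) / 2 := by
    intro a _
    have h := Real.convexOn_mul_log.2 (Set.mem_Ici.2 (hμ.1 a)) (Set.mem_Ici.2 (hπ.1 a))
      (by norm_num : (0:ℝ) ≤ 1/2) (by norm_num : (0:ℝ) ≤ 1/2) (by norm_num)
    simp only [smul_eq_mul] at h
    have e1 : (1:ℝ)/2 * μ a + 1/2 * π a = μ a / 2 + π a / 2 := by ring
    rw [e1] at h; linarith
  have hlt : (μ a0 / 2 + π a0 / 2) * Real.log (μ a0 / 2 + π a0 / 2)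
      < (μ a0 * Real.log (μ a0) + π a0 * Real.log (π a0)) / 2 := by
    have h := Real.strictConvexOn_mul_log.2 (Set.mem_Ici.2 (hμ.1 a0)) (Set.mem_Ici.2 (hπ.1 a0))
      ha0 (by norm_num : (0:ℝ) < 1/2) (by norm_num : (0:ℝ) < 1/2) (by norm_num)
    simp only [smul_eq_mul] at h
    have e1 : (1:ℝ)/2 * μ a0 + 1/2 * π a0 = μ a0 / 2 + π a0 / 2 := by ring
    rw [e1] at h; linarith
  have hsum := Finset.sum_lt_sum hle ⟨a0, Finset.mem_univ a0, hlt⟩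
  have hsplit : ∑ a, (μ a * Real.log (μ a) + π a * Real.log (π a)) / 2
      = ((∑ a, μ a * Real.log (μ a)) + ∑ a, π a * Real.log (π a)) / 2 := by
    rw [← Finset.sum_add_distrib, Finset.sum_div]
  rw [hsplit] at hsum
  simp only [entropyFn]
  linarith

/-- **NPG is an instance of DSPI** (Proposition 1). -/
theorem npg_is_dspi
    (M : MDP S A)
    (α : ℕ → ℝ) (hα : ∀ k, 0 < α k)
    (N : NPGSeq M α)
    (β : ℕ → ℝ) (hβ0 : β 0 = 1)
    (hβ : ∀ k ≥ 1, β k = α k / ∑ i ∈ Finset.range (k + 1), α i)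
    (Qbar : ℕ → S → A → ℝ) (hQbar0 : Qbar 0 = 0)
    (hQbarSucc : ∀ k, Qbar (k + 1) = (1 - β k) • Qbar k + β k • N.Qpi k) :
    ∀ k : ℕ,
      (Qbar (k + 1) = (∑ i ∈ Finset.range (k + 1), α i)⁻¹ •
          ∑ i ∈ Finset.range (k + 1), α i • N.Qpi i) ∧
      (∏ j ∈ Finset.Icc 1 k, (1 - β j) = α 0 / ∑ i ∈ Finset.range (k + 1), α i) ∧
      (∀ s,
        (∀ μ ∈ stdSimplex ℝ A,
          ∑ a, μ a * Qbar (k + 1) s a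
              + ((α 0)⁻¹ * ∏ j ∈ Finset.Icc 1 k, (1 - β j)) * entropyFn μ
            ≤ ∑ a, N.pol (k + 1) s a * Qbar (k + 1) s a
              + ((α 0)⁻¹ * ∏ j ∈ Finset.Icc 1 k, (1 - β j)) * entropyFn (N.pol (k + 1) s)) ∧
        (∀ μ ∈ stdSimplex ℝ A,
          (∀ μ' ∈ stdSimplex ℝ A,
            ∑ a, μ' a * Qbar (k + 1) s a
                + ((α 0)⁻¹ * ∏ j ∈ Finset.Icc 1 k, (1 - β j)) * entropyFn μ'
              ≤ ∑ a, μ a * Qbar (k + 1) s a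
                + ((α 0)⁻¹ * ∏ j ∈ Finset.Icc 1 k, (1 - β j)) * entropyFn μ) →
          μ = N.pol (k + 1) s)) := by
  have hSpos : ∀ k : ℕ, 0 < ∑ i ∈ Finset.range (k + 1), α i := fun k =>
    Finset.sum_pos (fun i _ => hα i) (by simp)
  have hθ : ∀ k : ℕ, N.θ (k + 1) = ∑ i ∈ Finset.range (k + 1), α i • N.Qpi i := by
    intro k
    induction k with
    | zero => simp [N.hθSucc 0, N.hθ0]
    | succ k ih => rw [N.hθSucc (k + 1), ih, ← Finset.sum_range_succ]
  have key : ∀ k : ℕ,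
      Qbar (k + 1) = (∑ i ∈ Finset.range (k + 1), α i)⁻¹ •
          ∑ i ∈ Finset.range (k + 1), α i • N.Qpi i ∧
      ∏ j ∈ Finset.Icc 1 k, (1 - β j) = α 0 / ∑ i ∈ Finset.range (k + 1), α i := by
    intro k
    induction k with
    | zero =>
      constructor
      · rw [hQbarSucc 0, hβ0, hQbar0]
        funext s a
        simp [Finset.sum_range_succ, (hα 0).ne']
      · simp [div_self (hα 0).ne']
    | succ k ih =>
      have hSk := hSpos k
      have hSk1 := hSpos (k + 1)
      have hβk1 : β (k + 1) = α (k + 1) / ∑ i ∈ Finset.range (k + 1 + 1), α i :=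
        hβ (k + 1) (by omega)
      have hsplit : ∑ i ∈ Finset.range (k + 1 + 1), α i
          = (∑ i ∈ Finset.range (k + 1), α i) + α (k + 1) := Finset.sum_range_succ α (k + 1)
      have h1mβ : 1 - β (k + 1)
          = (∑ i ∈ Finset.range (k + 1), α i) / ∑ i ∈ Finset.range (k + 1 + 1), α i := by
        rw [hβk1, eq_div_iff hSk1.ne', sub_mul, one_mul, div_mul_cancel₀ _ hSk1.ne', hsplit]
        ring
      constructor
      · rw [hQbarSucc (k + 1), ih.1]
        funext s a
        simp only [Pi.add_apply, Pi.smul_apply, smul_eq_mul, Finset.sum_apply]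
        conv_rhs => rw [Finset.sum_range_succ (f := fun i => α i * N.Qpi i s a)]
        rw [h1mβ, hβk1, hsplit]
        have hB : (∑ i ∈ Finset.range (k + 1), α i) + α (k + 1) ≠ 0 := by have := hα (k + 1); linarith
        field_simp
      · rw [Finset.prod_Icc_succ_top (by omega : 1 ≤ k + 1), ih.2, h1mβ]
        rw [div_mul_div_comm, div_eq_div_iff (by positivity) hSk1.ne']
        ring
  intro k
  refine ⟨(key k).1, (key k).2, fun s => ?_⟩
  have hSk := hSpos k
  have hc : (α 0)⁻¹ * ∏ j ∈ Finset.Icc 1 k, (1 - β j)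
      = (∑ i ∈ Finset.range (k + 1), α i)⁻¹ := by
    rw [(key k).2, div_eq_mul_inv, ← mul_assoc, inv_mul_cancel₀ (hα 0).ne', one_mul]
  have hQθ : ∀ a, Qbar (k + 1) s a
      = (∑ i ∈ Finset.range (k + 1), α i)⁻¹ * N.θ (k + 1) s a := by
    intro a
    rw [(key k).1, hθ k]
    simp
  have factor : ∀ ν : A → ℝ,
      ∑ a, ν a * Qbar (k + 1) s a
          + (∑ i ∈ Finset.range (k + 1), α i)⁻¹ * entropyFn ν
        = (∑ i ∈ Finset.range (k + 1), α i)⁻¹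
            * (∑ a, ν a * N.θ (k + 1) s a + entropyFn ν) := by
    intro ν
    rw [mul_add, Finset.mul_sum]
    congr 1
    exact Finset.sum_congr rfl fun a _ => by rw [hQθ a]; ring
  have main : ∀ μ ∈ stdSimplex ℝ A,
      ∑ a, μ a * Qbar (k + 1) s a
          + ((α 0)⁻¹ * ∏ j ∈ Finset.Icc 1 k, (1 - β j)) * entropyFn μ
        ≤ ∑ a, N.pol (k + 1) s a * Qbar (k + 1) s a
          + ((α 0)⁻¹ * ∏ j ∈ Finset.Icc 1 k, (1 - β j)) * entropyFn (N.pol (k + 1) s) := by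
    intro μ hμ
    rw [hc, factor μ, factor (N.pol (k + 1) s)]
    exact mul_le_mul_of_nonneg_left (N.hmax k s μ hμ) (inv_nonneg.2 hSk.le)
  refine ⟨main, fun μ hμ hopt => ?_⟩
  by_contra hne
  set π := N.pol (k + 1) s with hπdef
  have hπ : π ∈ stdSimplex ℝ A := N.hpol (k + 1) s
  set c : ℝ := (α 0)⁻¹ * ∏ j ∈ Finset.Icc 1 k, (1 - β j) with hcdef
  have hcpos : 0 < c := by rw [hc]; exact inv_pos.2 hSk
  have h1 : ∑ a, π a * Qbar (k + 1) s a + c * entropyFn π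
      ≤ ∑ a, μ a * Qbar (k + 1) s a + c * entropyFn μ := hopt π hπ
  have h2 : ∑ a, μ a * Qbar (k + 1) s a + c * entropyFn μ
      ≤ ∑ a, π a * Qbar (k + 1) s a + c * entropyFn π := main μ hμ
  set ν : A → ℝ := fun a => μ a / 2 + π a / 2 with hνdef
  have hν : ν ∈ stdSimplex ℝ A := by
    constructor
    · intro a
      have := hμ.1 a; have := hπ.1 a
      simp only [hνdef]; linarith
    · simp only [hνdef]
      rw [Finset.sum_add_distrib, ← Finset.sum_div, ← Finset.sum_div, hμ.2, hπ.2]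
      norm_num
  have hent := entropy_midpoint_strict μ π hμ hπ hne
  have hlin : ∑ a, ν a * Qbar (k + 1) s a
      = ((∑ a, μ a * Qbar (k + 1) s a) + ∑ a, π a * Qbar (k + 1) s a) / 2 := by
    rw [← Finset.sum_add_distrib, Finset.sum_div]
    exact Finset.sum_congr rfl fun a _ => by simp only [hνdef]; ring
  have hνle : ∑ a, ν a * Qbar (k + 1) s a + c * entropyFn ν
      ≤ ∑ a, μ a * Qbar (k + 1) s a + c * entropyFn μ := hopt ν hν
  have hstrict : c * ((entropyFn μ + entropyFn π) / 2) < c * entropyFn ν :=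
    mul_lt_mul_of_pos_left (by simpa [hνdef] using hent) hcpos
  linarith
end
end

section
/- Natural policy gradient with geometrically increasing stepsizes converges geometrically: assume |A| = m ≥ 2, let β ∈ (0,1), and let (π_k, θ_k) be an NPG sequence with stepsizes α_0 = log(m) and α_k = β·α_0/(1−β)^k for all k ≥ 1. Then for every k ≥ 1, ‖V* − V^{π_k}‖∞ ≤ (1 − (1−γ)β)^{k−1} · (γ‖V* − V^{π_0}‖∞ + 1). -/
open Finset

noncomputable section

variable {S A : Type*} [Fintype S] [Fintype A] [Nonempty S] [Nonempty A]

section NPGAux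

set_option linter.unusedSectionVars false

set_option maxHeartbeats 1000000

lemma le_iSup'' {B : Type*} [Nonempty B] [Fintype B] (f : B → ℝ) (a : B) :
    f a ≤ ⨆ a', f a' :=
  le_ciSup (Set.Finite.bddAbove (Set.finite_range f)) a

lemma wavg_le {w f : A → ℝ} (hw : w ∈ stdSimplex ℝ A) {c : ℝ} (h : ∀ a, f a ≤ c) :
    ∑ a, w a * f a ≤ c := by
  calc ∑ a, w a * f a ≤ ∑ a, w a * c :=
        Finset.sum_le_sum fun a _ => mul_le_mul_of_nonneg_left (h a) (hw.1 a)
    _ = c := by rw [← Finset.sum_mul, hw.2, one_mul]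

lemma wavg_le' {w f : S → ℝ} (hw : w ∈ stdSimplex ℝ S) {c : ℝ} (h : ∀ s, f s ≤ c) :
    ∑ s, w s * f s ≤ c := by
  calc ∑ s, w s * f s ≤ ∑ s, w s * c :=
        Finset.sum_le_sum fun s _ => mul_le_mul_of_nonneg_left (h s) (hw.1 s)
    _ = c := by rw [← Finset.sum_mul, hw.2, one_mul]

lemma wavg_mono {w f g : A → ℝ} (hw : ∀ a, 0 ≤ w a) (h : ∀ a, f a ≤ g a) :
    ∑ a, w a * f a ≤ ∑ a, w a * g a :=
  Finset.sum_le_sum fun a _ => mul_le_mul_of_nonneg_left (h a) (hw a)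

lemma entropy_le_log {μ : A → ℝ} (hμ : μ ∈ stdSimplex ℝ A) :
    entropyFn μ ≤ Real.log (Fintype.card A) := by
  set m : ℝ := (Fintype.card A : ℝ) with hm
  have hm0 : 0 < m := by
    simp only [hm, Nat.cast_pos]; exact Fintype.card_pos
  have key : ∀ a, μ a * (-Real.log (μ a) - Real.log m) ≤ m⁻¹ - μ a := by
    intro a
    rcases eq_or_lt_of_le (hμ.1 a) with h0 | h0
    · rw [← h0]; simp; positivity
    · have hmμ : 0 < m * μ a := by positivity
      have hlog : Real.log ((m * μ a)⁻¹) ≤ (m * μ a)⁻¹ - 1 :=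
        Real.log_le_sub_one_of_pos (by positivity)
      rw [Real.log_inv] at hlog
      have h2 : -Real.log (μ a) - Real.log m = -Real.log (m * μ a) := by
        rw [Real.log_mul (ne_of_gt hm0) (ne_of_gt h0)]; ring
      rw [h2]
      have := mul_le_mul_of_nonneg_left hlog (le_of_lt h0)
      calc μ a * -Real.log (m * μ a) ≤ μ a * ((m * μ a)⁻¹ - 1) := by linarith
        _ = m⁻¹ - μ a := by field_simp
  have hsum : ∑ a, μ a * (-Real.log (μ a) - Real.log m) ≤ ∑ a : A, (m⁻¹ - μ a) :=
    Finset.sum_le_sum fun a _ => key a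
  have hrhs : ∑ a : A, (m⁻¹ - μ a) = 0 := by
    rw [Finset.sum_sub_distrib, hμ.2, Finset.sum_const, Finset.card_univ, nsmul_eq_mul]
    field_simp [hm]
    rw [hm]; ring
  have hlhs : ∑ a, μ a * (-Real.log (μ a) - Real.log m)
      = entropyFn μ - Real.log m := by
    simp only [mul_sub, mul_neg, Finset.sum_sub_distrib, ← Finset.sum_mul, hμ.2,
      entropyFn, Finset.sum_neg_distrib, one_mul]
  rw [hlhs, hrhs] at hsum
  linarith

lemma entropy_dirac [DecidableEq A] (a0 : A) :
    entropyFn (fun a => if a = a0 then (1:ℝ) else 0) = 0 := by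
  unfold entropyFn
  rw [neg_eq_zero]
  apply Finset.sum_eq_zero
  intro a _
  by_cases h : a = a0 <;> simp [h]

lemma dirac_mem [DecidableEq A] (a0 : A) :
    (fun a => if a = a0 then (1:ℝ) else 0) ∈ stdSimplex ℝ A := by
  constructor
  · intro a; by_cases h : a = a0 <;> simp [h]
  · simp

lemma entropy_uniform : entropyFn (fun _ : A => (Fintype.card A : ℝ)⁻¹)
    = Real.log (Fintype.card A) := by
  have hm0 : (0:ℝ) < (Fintype.card A : ℝ) := by
    simp only [Nat.cast_pos]; exact Fintype.card_pos
  unfold entropyFn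
  rw [Finset.sum_const, Finset.card_univ, nsmul_eq_mul, Real.log_inv]
  field_simp

/-- Generic contraction / comparison lemma. -/
lemma contraction_le (M : MDP S A) (D : S → A → ℝ) (w : S → A → ℝ)
    (hw : ∀ s, w s ∈ stdSimplex ℝ A)
    (h : ∀ s a, D s a ≤ M.γ * ∑ s', M.p s a s' * ∑ a', w s' a' * D s' a') :
    ∀ s a, D s a ≤ 0 := by
  obtain ⟨⟨s0, a0⟩, -, hmax⟩ :=
    Finset.exists_max_image (Finset.univ : Finset (S × A)) (fun x => D x.1 x.2)
      ⟨⟨Classical.arbitrary S, Classical.arbitrary A⟩, Finset.mem_univ _⟩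
  have hmax' : ∀ s a, D s a ≤ D s0 a0 := fun s a => hmax ⟨s, a⟩ (Finset.mem_univ _)
  set t := D s0 a0 with ht
  have hinner : ∀ s', ∑ a', w s' a' * D s' a' ≤ t := fun s' =>
    wavg_le (hw s') (fun a' => hmax' s' a')
  have houter : ∑ s', M.p s0 a0 s' * ∑ a', w s' a' * D s' a' ≤ t :=
    wavg_le' (M.hp s0 a0) hinner
  have hγ0 := M.hγ.1
  have hγ1 := M.hγ.2
  have htle : t ≤ M.γ * t :=
    le_trans (h s0 a0) (mul_le_mul_of_nonneg_left houter (le_of_lt hγ0))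
  have ht0 : t ≤ 0 := by nlinarith
  exact fun s a => le_trans (hmax' s a) ht0

variable {M : MDP S A} {α : ℕ → ℝ}

/-- Fixed-point expansion of `Q^{π_k}`. -/
lemma Qpi_eq (N : NPGSeq M α) (k : ℕ) (s : S) (a : A) :
    N.Qpi k s a = M.R s a + M.γ * ∑ s', M.p s a s' * valueOf (N.pol k) (N.Qpi k) s' := by
  have := congrFun (congrFun (N.hQpi k) s) a
  rw [← this]; rfl

/-- Expansion of `Q*`. -/
lemma Qstar_eq {Qstar : S → A → ℝ} (hQstar : bellmanOpt M Qstar = Qstar) (s : S) (a : A) :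
    Qstar s a = M.R s a + M.γ * ∑ s', M.p s a s' * Vstar Qstar s' := by
  have h2 := congrFun (congrFun hQstar s) a
  rw [← h2]; rfl

/-- `Q^{π_k} ≤ Q*`. -/
lemma Qpi_le_Qstar (N : NPGSeq M α) {Qstar : S → A → ℝ}
    (hQstar : bellmanOpt M Qstar = Qstar) (k : ℕ) (s : S) (a : A) :
    N.Qpi k s a ≤ Qstar s a := by
  have key : ∀ s a, N.Qpi k s a - Qstar s a
      ≤ M.γ * ∑ s', M.p s a s' * ∑ a', N.pol k s' a' * (N.Qpi k s' a' - Qstar s' a') := by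
    intro s a
    rw [Qpi_eq N k s a, Qstar_eq hQstar s a]
    have h1 : ∀ s', valueOf (N.pol k) (N.Qpi k) s' - Vstar Qstar s'
        ≤ ∑ a', N.pol k s' a' * (N.Qpi k s' a' - Qstar s' a') := by
      intro s'
      have h2 : ∑ a', N.pol k s' a' * (N.Qpi k s' a' - Qstar s' a')
          = valueOf (N.pol k) (N.Qpi k) s' - ∑ a', N.pol k s' a' * Qstar s' a' := by
        simp [valueOf, mul_sub, Finset.sum_sub_distrib]
      have h3 : ∑ a', N.pol k s' a' * Qstar s' a' ≤ Vstar Qstar s' :=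
        wavg_le (N.hpol k s') (fun a' => le_iSup'' (Qstar s') a')
      rw [h2]; linarith [h3]
    have h4 : ∑ s', M.p s a s' * valueOf (N.pol k) (N.Qpi k) s'
          - ∑ s', M.p s a s' * Vstar Qstar s'
        ≤ ∑ s', M.p s a s' * ∑ a', N.pol k s' a' * (N.Qpi k s' a' - Qstar s' a') := by
      rw [← Finset.sum_sub_distrib]
      apply Finset.sum_le_sum
      intro s' _
      rw [← mul_sub]
      exact mul_le_mul_of_nonneg_left (h1 s') ((M.hp s a).1 s')
    have hγ0 := le_of_lt M.hγ.1
    nlinarith [mul_le_mul_of_nonneg_left h4 hγ0]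
  exact sub_nonpos.mp (contraction_le M _ (N.pol k) (N.hpol k) key s a)

/-- `V^{π_k} ≤ V*`. -/
lemma V_le_Vstar (N : NPGSeq M α) {Qstar : S → A → ℝ}
    (hQstar : bellmanOpt M Qstar = Qstar) (k : ℕ) (s : S) :
    valueOf (N.pol k) (N.Qpi k) s ≤ Vstar Qstar s := by
  have h1 : ∑ a, N.pol k s a * N.Qpi k s a ≤ ∑ a, N.pol k s a * Qstar s a :=
    wavg_mono (fun a => (N.hpol k s).1 a) (fun a => Qpi_le_Qstar N hQstar k s a)
  have h2 : ∑ a, N.pol k s a * Qstar s a ≤ Vstar Qstar s :=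
    wavg_le (N.hpol k s) (fun a => le_iSup'' (Qstar s) a)
  calc valueOf (N.pol k) (N.Qpi k) s = ∑ a, N.pol k s a * N.Qpi k s a := rfl
    _ ≤ Vstar Qstar s := le_trans h1 h2

/-- Pointwise bound `V*(s') − V^{π_j}(s') ≤ δ_j`. -/
lemma gap_le_supNorm (N : NPGSeq M α) (Qstar : S → A → ℝ) (j : ℕ) (s' : S) :
    Vstar Qstar s' - valueOf (N.pol j) (N.Qpi j) s'
      ≤ supNormV (Vstar Qstar - valueOf (N.pol j) (N.Qpi j)) := by
  have h1 : |(Vstar Qstar - valueOf (N.pol j) (N.Qpi j)) s'|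
      ≤ supNormV (Vstar Qstar - valueOf (N.pol j) (N.Qpi j)) :=
    le_iSup'' (fun s => |(Vstar Qstar - valueOf (N.pol j) (N.Qpi j)) s|) s'
  calc Vstar Qstar s' - valueOf (N.pol j) (N.Qpi j) s'
      = (Vstar Qstar - valueOf (N.pol j) (N.Qpi j)) s' := rfl
    _ ≤ |(Vstar Qstar - valueOf (N.pol j) (N.Qpi j)) s'| := le_abs_self _
    _ ≤ _ := h1

lemma supNorm_nonneg (N : NPGSeq M α) (Qstar : S → A → ℝ) (j : ℕ) :
    0 ≤ supNormV (Vstar Qstar - valueOf (N.pol j) (N.Qpi j)) := by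
  obtain ⟨s⟩ := (inferInstance : Nonempty S)
  exact le_trans (abs_nonneg _)
    (le_iSup'' (fun s => |(Vstar Qstar - valueOf (N.pol j) (N.Qpi j)) s|) s)

/-- `Q*(s,a) − Q^{π_j}(s,a) ≤ γ δ_j`. -/
lemma Q_gap (N : NPGSeq M α) {Qstar : S → A → ℝ} (hQstar : bellmanOpt M Qstar = Qstar)
    (j : ℕ) (s : S) (a : A) :
    Qstar s a - N.Qpi j s a
      ≤ M.γ * supNormV (Vstar Qstar - valueOf (N.pol j) (N.Qpi j)) := by
  set δ := supNormV (Vstar Qstar - valueOf (N.pol j) (N.Qpi j)) with hδ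
  rw [Qstar_eq hQstar s a, Qpi_eq N j s a]
  have h4 : ∑ s', M.p s a s' * Vstar Qstar s'
        - ∑ s', M.p s a s' * valueOf (N.pol j) (N.Qpi j) s' ≤ δ := by
    rw [← Finset.sum_sub_distrib]
    simp_rw [← mul_sub]
    exact wavg_le' (M.hp s a) (fun s' => gap_le_supNorm N Qstar j s')
  have hγ0 := le_of_lt M.hγ.1
  nlinarith [mul_le_mul_of_nonneg_left h4 hγ0]

/-- Policy improvement step: `V^{π_k}(s) ≤ π_{k+1} · Q^{π_k}(s)`. -/
lemma step_improve (N : NPGSeq M α) (hα : ∀ k, 0 < α k) (k : ℕ) (s : S) :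
    valueOf (N.pol k) (N.Qpi k) s ≤ ∑ a, N.pol (k+1) s a * N.Qpi k s a := by
  have hθpt : ∀ a, N.θ (k+1) s a = N.θ k s a + α k * N.Qpi k s a := by
    intro a
    have := congrFun (congrFun (N.hθSucc k) s) a
    simpa using this
  have expand : ∀ μ : A → ℝ, ∑ a, μ a * N.θ (k+1) s a
      = ∑ a, μ a * N.θ k s a + α k * ∑ a, μ a * N.Qpi k s a := by
    intro μ
    rw [Finset.mul_sum, ← Finset.sum_add_distrib]
    exact Finset.sum_congr rfl fun a _ => by rw [hθpt a]; ring
  have h1 := N.hmax k s (N.pol k s) (N.hpol k s)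
  have h2 : ∑ a, N.pol (k+1) s a * N.θ k s a + entropyFn (N.pol (k+1) s)
      ≤ ∑ a, N.pol k s a * N.θ k s a + entropyFn (N.pol k s) := by
    cases k with
    | zero =>
      have hz : ∀ (μ : A → ℝ), ∑ a, μ a * N.θ 0 s a = 0 := by
        intro μ; apply Finset.sum_eq_zero; intro a _
        rw [N.hθ0]; simp
      rw [hz, hz]
      have he : entropyFn (N.pol 0 s) = Real.log (Fintype.card A) := by
        have hu : N.pol 0 s = fun _ => (Fintype.card A : ℝ)⁻¹ := funext (N.hpol0 s)
        rw [hu, entropy_uniform]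
      rw [he]
      linarith [entropy_le_log (N.hpol (0+1) s)]
    | succ j => exact N.hmax j s (N.pol (j+1+1) s) (N.hpol (j+1+1) s)
  rw [expand, expand] at h1
  have h3 : α k * ∑ a, N.pol k s a * N.Qpi k s a
      ≤ α k * ∑ a, N.pol (k+1) s a * N.Qpi k s a := by linarith
  have h4 := le_of_mul_le_mul_left h3 (hα k)
  exact h4

/-- One-step monotonicity: `Q^{π_k} ≤ Q^{π_{k+1}}`. -/
lemma Q_mono_step (N : NPGSeq M α) (hα : ∀ k, 0 < α k) (k : ℕ) :
    ∀ s a, N.Qpi k s a ≤ N.Qpi (k+1) s a := by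
  have key : ∀ s a, N.Qpi k s a - N.Qpi (k+1) s a
      ≤ M.γ * ∑ s', M.p s a s' * ∑ a', N.pol (k+1) s' a'
          * (N.Qpi k s' a' - N.Qpi (k+1) s' a') := by
    intro s a
    rw [Qpi_eq N k s a, Qpi_eq N (k+1) s a]
    have h1 : ∀ s', valueOf (N.pol k) (N.Qpi k) s' - valueOf (N.pol (k+1)) (N.Qpi (k+1)) s'
        ≤ ∑ a', N.pol (k+1) s' a' * (N.Qpi k s' a' - N.Qpi (k+1) s' a') := by
      intro s'
      have h2 : ∑ a', N.pol (k+1) s' a' * (N.Qpi k s' a' - N.Qpi (k+1) s' a')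
          = ∑ a', N.pol (k+1) s' a' * N.Qpi k s' a'
            - valueOf (N.pol (k+1)) (N.Qpi (k+1)) s' := by
        simp [valueOf, mul_sub, Finset.sum_sub_distrib]
      rw [h2]; linarith [step_improve N hα k s']
    have h4 : ∑ s', M.p s a s' * valueOf (N.pol k) (N.Qpi k) s'
          - ∑ s', M.p s a s' * valueOf (N.pol (k+1)) (N.Qpi (k+1)) s'
        ≤ ∑ s', M.p s a s' * ∑ a', N.pol (k+1) s' a'
            * (N.Qpi k s' a' - N.Qpi (k+1) s' a') := by
      rw [← Finset.sum_sub_distrib]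
      apply Finset.sum_le_sum
      intro s' _
      rw [← mul_sub]
      exact mul_le_mul_of_nonneg_left (h1 s') ((M.hp s a).1 s')
    have hγ0 := le_of_lt M.hγ.1
    nlinarith [mul_le_mul_of_nonneg_left h4 hγ0]
  exact fun s a => sub_nonpos.mp (contraction_le M _ (N.pol (k+1)) (N.hpol (k+1)) key s a)

lemma Q_mono (N : NPGSeq M α) (hα : ∀ k, 0 < α k) {j k : ℕ} (hjk : j ≤ k) :
    ∀ s a, N.Qpi j s a ≤ N.Qpi k s a := by
  induction k with
  | zero =>
    have : j = 0 := Nat.le_zero.mp hjk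
    subst this; exact fun s a => le_refl _
  | succ i ih =>
    by_cases h : j ≤ i
    · exact fun s a => le_trans (ih h s a) (Q_mono_step N hα i s a)
    · have : j = i + 1 := by omega
      subst this; exact fun s a => le_refl _

lemma theta_sum (N : NPGSeq M α) (k : ℕ) (s : S) (a : A) :
    N.θ k s a = ∑ j ∈ Finset.range k, α j * N.Qpi j s a := by
  induction k with
  | zero => rw [N.hθ0]; simp
  | succ j ih =>
    have h := congrFun (congrFun (N.hθSucc j) s) a
    simp only [Pi.add_apply, Pi.smul_apply, smul_eq_mul] at h
    rw [Finset.sum_range_succ, ← ih, h]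

/-- The key per-step bound. -/
lemma key_bound (N : NPGSeq M α) (hα : ∀ k, 0 < α k)
    {Qstar : S → A → ℝ} (hQstar : bellmanOpt M Qstar = Qstar) (k : ℕ) (s : S) :
    (∑ j ∈ Finset.range (k+1), α j)
        * (Vstar Qstar s - valueOf (N.pol (k+1)) (N.Qpi (k+1)) s)
      ≤ Real.log (Fintype.card A)
        + M.γ * ∑ j ∈ Finset.range (k+1),
            α j * supNormV (Vstar Qstar - valueOf (N.pol j) (N.Qpi j)) := by
  classical
  obtain ⟨a0, -, ha0⟩ := Finset.exists_max_image Finset.univ (Qstar s)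
    ⟨Classical.arbitrary A, Finset.mem_univ _⟩
  have hVs : Vstar Qstar s = Qstar s a0 :=
    le_antisymm (ciSup_le fun a => ha0 a (Finset.mem_univ a)) (le_iSup'' (Qstar s) a0)
  -- hmax with a Dirac policy
  have hmaxd := N.hmax k s (fun a => if a = a0 then (1:ℝ) else 0) (dirac_mem a0)
  have hdsum : ∑ a, (if a = a0 then (1:ℝ) else 0) * N.θ (k+1) s a = N.θ (k+1) s a0 := by
    rw [Finset.sum_eq_single a0]
    · simp
    · intro a _ ha; simp [ha]
    · intro h; exact absurd (Finset.mem_univ a0) h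
  have ineq2 : N.θ (k+1) s a0
      ≤ ∑ a, N.pol (k+1) s a * N.θ (k+1) s a + Real.log (Fintype.card A) := by
    rw [hdsum, entropy_dirac] at hmaxd
    linarith [entropy_le_log (N.hpol (k+1) s)]
  -- θ ≤ A_k Q^{π_k}
  have hθle : ∀ a, N.θ (k+1) s a ≤ (∑ j ∈ Finset.range (k+1), α j) * N.Qpi k s a := by
    intro a
    rw [theta_sum, Finset.sum_mul]
    exact Finset.sum_le_sum fun j hj =>
      mul_le_mul_of_nonneg_left
        (Q_mono N hα (Nat.lt_succ_iff.mp (Finset.mem_range.mp hj)) s a)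
        (le_of_lt (hα j))
  have ineq1 : ∑ a, N.pol (k+1) s a * N.θ (k+1) s a
      ≤ (∑ j ∈ Finset.range (k+1), α j) * ∑ a, N.pol (k+1) s a * N.Qpi k s a := by
    rw [Finset.mul_sum]
    apply Finset.sum_le_sum
    intro a _
    calc N.pol (k+1) s a * N.θ (k+1) s a
        ≤ N.pol (k+1) s a * ((∑ j ∈ Finset.range (k+1), α j) * N.Qpi k s a) :=
          mul_le_mul_of_nonneg_left (hθle a) ((N.hpol (k+1) s).1 a)
      _ = (∑ j ∈ Finset.range (k+1), α j) * (N.pol (k+1) s a * N.Qpi k s a) := by ring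
  -- lower bound on θ at a0
  have ineq3 : (∑ j ∈ Finset.range (k+1), α j) * Vstar Qstar s
      - M.γ * ∑ j ∈ Finset.range (k+1),
          α j * supNormV (Vstar Qstar - valueOf (N.pol j) (N.Qpi j))
      ≤ N.θ (k+1) s a0 := by
    rw [theta_sum, hVs]
    have hterm : ∀ j ∈ Finset.range (k+1),
        α j * Qstar s a0
          - M.γ * (α j * supNormV (Vstar Qstar - valueOf (N.pol j) (N.Qpi j)))
        ≤ α j * N.Qpi j s a0 := by
      intro j _
      have h := mul_le_mul_of_nonneg_left (Q_gap N hQstar j s a0) (le_of_lt (hα j))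
      have h2 : α j * (M.γ * supNormV (Vstar Qstar - valueOf (N.pol j) (N.Qpi j)))
          = M.γ * (α j * supNormV (Vstar Qstar - valueOf (N.pol j) (N.Qpi j))) := by ring
      rw [mul_sub, h2] at h
      linarith
    calc (∑ j ∈ Finset.range (k+1), α j) * Qstar s a0
          - M.γ * ∑ j ∈ Finset.range (k+1),
              α j * supNormV (Vstar Qstar - valueOf (N.pol j) (N.Qpi j))
        = ∑ j ∈ Finset.range (k+1),
            (α j * Qstar s a0
              - M.γ * (α j * supNormV (Vstar Qstar - valueOf (N.pol j) (N.Qpi j)))) := by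
          rw [Finset.sum_sub_distrib, ← Finset.sum_mul, ← Finset.mul_sum]
      _ ≤ ∑ j ∈ Finset.range (k+1), α j * N.Qpi j s a0 := Finset.sum_le_sum hterm
  -- π_{k+1} · Q^{π_k} ≤ V^{π_{k+1}}
  have ineq4 : ∑ a, N.pol (k+1) s a * N.Qpi k s a
      ≤ valueOf (N.pol (k+1)) (N.Qpi (k+1)) s :=
    wavg_mono (fun a => (N.hpol (k+1) s).1 a) (fun a => Q_mono_step N hα k s a)
  have hAnn : 0 ≤ ∑ j ∈ Finset.range (k+1), α j :=
    Finset.sum_nonneg fun j _ => le_of_lt (hα j)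
  have ineq4' := mul_le_mul_of_nonneg_left ineq4 hAnn
  rw [mul_sub]
  linarith

/-- The scalar recursion lemma. -/
lemma rec_lemma (γ b L : ℝ) (hγ : γ ∈ Set.Ioo (0:ℝ) 1) (hb : b ∈ Set.Ioo (0:ℝ) 1)
    (hL : 0 < L)
    (α δ : ℕ → ℝ) (hαpos : ∀ k, 0 < α k) (hα0 : α 0 = L)
    (hαk : ∀ k, 1 ≤ k → α k = b * L / (1-b)^k)
    (hδ : ∀ k, 0 ≤ δ k)
    (hrec : ∀ k, δ (k+1) ≤ (L + γ * ∑ j ∈ Finset.range (k+1), α j * δ j)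
        / (∑ j ∈ Finset.range (k+1), α j)) :
    ∀ k, 1 ≤ k → δ k ≤ (1 - (1-γ)*b)^(k-1) * (γ * δ 0 + 1) := by
  obtain ⟨hγ0, hγ1⟩ := hγ
  obtain ⟨hb0, hb1⟩ := hb
  have h1b : (0:ℝ) < 1 - b := by linarith
  set ρ := 1 - (1-γ)*b with hρdef
  have hρpos : 0 < ρ := by nlinarith
  set c := γ * δ 0 + 1 with hc
  have hcpos : 0 < c := by nlinarith [hδ 0]
  have hA : ∀ k, ∑ j ∈ Finset.range (k+1), α j = L / (1-b)^k := by
    intro k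
    induction k with
    | zero => simp [hα0]
    | succ i ih =>
      rw [Finset.sum_range_succ, ih, hαk (i+1) (by omega)]
      have hne : (1-b)^(i+1) ≠ 0 := by positivity
      field_simp
      ring
  have geo : ∀ k, γ * ∑ i ∈ Finset.range k, (b * L / (1-b)^(i+1)) * (ρ^i * c)
      = L * c * (ρ^k / (1-b)^k - 1) := by
    intro k
    induction k with
    | zero => simp
    | succ i ih =>
      rw [Finset.sum_range_succ, mul_add, ih]
      have hne : (1-b)^i ≠ 0 := by positivity
      have hne1 : (1-b)^(i+1) ≠ 0 := by positivity
      field_simp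
      ring
  have main : ∀ k, δ (k+1) ≤ ρ^k * c := by
    intro k
    induction k using Nat.strong_induction_on with
    | _ k ih =>
      have hs : ∑ j ∈ Finset.range (k+1), α j * δ j
          ≤ α 0 * δ 0 + ∑ i ∈ Finset.range k, (b*L/(1-b)^(i+1)) * (ρ^i * c) := by
        rw [Finset.sum_range_succ']
        have hterm : ∀ i ∈ Finset.range k,
            α (i+1) * δ (i+1) ≤ (b*L/(1-b)^(i+1)) * (ρ^i * c) := by
          intro i hi
          rw [hαk (i+1) (by omega)]
          exact mul_le_mul_of_nonneg_left (ih i (Finset.mem_range.mp hi)) (by positivity)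
        linarith [Finset.sum_le_sum hterm]
      have h2 := hrec k
      rw [hA k] at h2
      have hApos : 0 < L / (1-b)^k := by positivity
      have hnum : L + γ * ∑ j ∈ Finset.range (k+1), α j * δ j
          ≤ L * c * (ρ^k/(1-b)^k) := by
        have hgeo := geo k
        have hmul := mul_le_mul_of_nonneg_left hs (le_of_lt hγ0)
        rw [mul_add, hgeo] at hmul
        rw [hα0] at hmul
        have : γ * (L * δ 0) = L * (γ * δ 0) := by ring
        nlinarith
      calc δ (k+1) ≤ (L + γ * ∑ j ∈ Finset.range (k+1), α j * δ j) / (L / (1-b)^k) := h2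
        _ ≤ (L * c * (ρ^k/(1-b)^k)) / (L / (1-b)^k) :=
            (div_le_div_iff_of_pos_right hApos).mpr hnum
        _ = ρ^k * c := by
            have hne : (1-b)^k ≠ 0 := by positivity
            field_simp
  intro k hk
  have h := main (k-1)
  rwa [Nat.sub_add_cancel hk] at h

end NPGAux

/-- **NPG with geometrically increasing stepsizes converges geometrically** (Theorem 2). -/
theorem npg_geometric
    (M : MDP S A) (hA : 2 ≤ Fintype.card A)
    (b : ℝ) (hb : b ∈ Set.Ioo (0 : ℝ) 1)
    (α : ℕ → ℝ) (hα : ∀ k, 0 < α k)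
    (hα0 : α 0 = Real.log (Fintype.card A))
    (hαk : ∀ k ≥ 1, α k = b * α 0 / (1 - b) ^ k)
    (N : NPGSeq M α)
    (Qstar : S → A → ℝ) (hQstar : bellmanOpt M Qstar = Qstar) :
    ∀ k ≥ 1,
      supNormV (Vstar Qstar - valueOf (N.pol k) (N.Qpi k))
        ≤ (1 - (1 - M.γ) * b) ^ (k - 1)
          * (M.γ * supNormV (Vstar Qstar - valueOf (N.pol 0) (N.Qpi 0)) + 1) := by
  have hL : 0 < Real.log (Fintype.card A) :=
    Real.log_pos (by exact_mod_cast Nat.lt_of_lt_of_le one_lt_two hA)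
  have hrec : ∀ k, supNormV (Vstar Qstar - valueOf (N.pol (k+1)) (N.Qpi (k+1)))
      ≤ (Real.log (Fintype.card A)
          + M.γ * ∑ j ∈ Finset.range (k+1),
              α j * supNormV (Vstar Qstar - valueOf (N.pol j) (N.Qpi j)))
        / (∑ j ∈ Finset.range (k+1), α j) := by
    intro k
    have hApos : 0 < ∑ j ∈ Finset.range (k+1), α j :=
      Finset.sum_pos (fun j _ => hα j) Finset.nonempty_range_add_one
    show (⨆ s : S, |(Vstar Qstar - valueOf (N.pol (k+1)) (N.Qpi (k+1))) s|) ≤ _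
    refine ciSup_le fun s => ?_
    rw [Pi.sub_apply, abs_of_nonneg (sub_nonneg.mpr (V_le_Vstar N hQstar (k+1) s))]
    rw [le_div_iff₀ hApos]
    calc (Vstar Qstar s - valueOf (N.pol (k+1)) (N.Qpi (k+1)) s)
            * (∑ j ∈ Finset.range (k+1), α j)
        = (∑ j ∈ Finset.range (k+1), α j)
            * (Vstar Qstar s - valueOf (N.pol (k+1)) (N.Qpi (k+1)) s) := mul_comm _ _
      _ ≤ _ := key_bound N hα hQstar k s
  have hαk' : ∀ j, 1 ≤ j → α j = b * Real.log (Fintype.card A) / (1-b)^j := by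
    intro j hj; rw [hαk j hj, hα0]
  exact rec_lemma M.γ b (Real.log (Fintype.card A)) M.hγ hb hL α
    (fun j => supNormV (Vstar Qstar - valueOf (N.pol j) (N.Qpi j))) hα hα0 hαk'
    (fun j => supNorm_nonneg N Qstar j) hrec
end
end

section
/- Contractive recursion for DSPI: let (π_k, Q̄_k) be a DSPI sequence with stepsizes satisfying β_0 = 1 and β_k ∈ [0,1] for k ≥ 1. Then for all k ≥ 1, ‖Q* − Q̄_{k+1}‖∞ ≤ (1 − (1−γ)β_k) ‖Q* − Q̄_k‖∞ + γ β_k η_{k−1} ν_max, where η_{k−1} = τ ∏_{j=1}^{k−1} (1−β_j). -/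
open Finset

noncomputable section

variable {S A : Type*} [Fintype S] [Fintype A] [Nonempty S] [Nonempty A]

/-- The smoothed Bellman optimality operator `H_η`. -/
def smoothedOpt (M : MDP S A) (ν : (A → ℝ) → ℝ) (η : ℝ) (Q : S → A → ℝ) : S → A → ℝ :=
  fun s a => M.R s a + M.γ * ∑ s', M.p s a s' *
    (⨆ μ : stdSimplex ℝ A, (∑ a', μ.1 a' * Q s' a' + η * ν μ.1))

/-- The smoothed Bellman operator `H_η^π` of a policy `pol`. -/
def smoothedPol (M : MDP S A) (ν : (A → ℝ) → ℝ) (η : ℝ) (pol : S → A → ℝ)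
    (Q : S → A → ℝ) : S → A → ℝ :=
  fun s a => M.R s a + M.γ * ∑ s', M.p s a s' * (∑ a', pol s' a' * Q s' a' + η * ν (pol s'))

/-- `ν_max := max_{μ ∈ Δ(A)} ν(μ)`. -/
def nuMax (ν : (A → ℝ) → ℝ) : ℝ := sSup (ν '' stdSimplex ℝ A)

/-- `η_k = τ ∏_{j=1}^k (1 - β_j)`. -/
def eta (τ : ℝ) (β : ℕ → ℝ) (k : ℕ) : ℝ := τ * ∏ j ∈ Finset.Icc 1 k, (1 - β j)

/-- A DSPI sequence: policies `pol k` (with `Q`-functions `Qpi k`) and averaged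
`Q`-functions `Qbar k` satisfying the DSPI recursion. -/
structure DSPISeq (M : MDP S A) (ν : (A → ℝ) → ℝ) (τ : ℝ) (β : ℕ → ℝ) where
  pol : ℕ → S → A → ℝ
  Qpi : ℕ → S → A → ℝ
  Qbar : ℕ → S → A → ℝ
  hpol : ∀ k s, pol k s ∈ stdSimplex ℝ A
  hQpi : ∀ k, bellmanPol M (pol k) (Qpi k) = Qpi k
  hpol0 : ∀ s, ∀ μ ∈ stdSimplex ℝ A, ν μ ≤ ν (pol 0 s)
  hQbar0 : Qbar 0 = 0
  hQbarSucc : ∀ k, Qbar (k + 1) = (1 - β k) • Qbar k + β k • Qpi k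
  hgreedy : ∀ k, smoothedPol M ν (eta τ β k) (pol (k + 1)) (Qbar (k + 1))
      = smoothedOpt M ν (eta τ β k) (Qbar (k + 1))


section DSPIHelpers

private lemma le_fsup {I : Type*} [Fintype I] (x : I → ℝ) (i : I) : x i ≤ ⨆ j, x j :=
  le_ciSup (Set.Finite.bddAbove (Set.finite_range x)) i

private lemma wsum_le {I : Type*} [Fintype I] {w : I → ℝ} (hw : w ∈ stdSimplex ℝ I)
    {x : I → ℝ} {c : ℝ} (h : ∀ i, x i ≤ c) : ∑ i, w i * x i ≤ c := by
  calc ∑ i, w i * x i ≤ ∑ i, w i * c :=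
        Finset.sum_le_sum fun i _ => mul_le_mul_of_nonneg_left (h i) (hw.1 i)
    _ = c := by rw [← Finset.sum_mul, hw.2, one_mul]

private lemma wsum_mono {I : Type*} [Fintype I] {w : I → ℝ} (hw : ∀ i, 0 ≤ w i)
    {x y : I → ℝ} (h : ∀ i, x i ≤ y i) : ∑ i, w i * x i ≤ ∑ i, w i * y i :=
  Finset.sum_le_sum fun i _ => mul_le_mul_of_nonneg_left (h i) (hw i)

private lemma sum_mul_sub {I : Type*} [Fintype I] (w u v : I → ℝ) :
    (∑ i, w i * u i) - ∑ i, w i * v i = ∑ i, w i * (u i - v i) := by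
  rw [← Finset.sum_sub_distrib]
  exact Finset.sum_congr rfl fun _ _ => (mul_sub _ _ _).symm

private lemma mix_wsum {I : Type*} [Fintype I] (c d : ℝ) (w f g : I → ℝ) :
    c * (∑ i, w i * f i) + d * (∑ i, w i * g i) = ∑ i, w i * (c * f i + d * g i) := by
  rw [Finset.mul_sum, Finset.mul_sum, ← Finset.sum_add_distrib]
  exact Finset.sum_congr rfl fun _ _ => by ring

private lemma sum_mul_add_const {I : Type*} [Fintype I] {w : I → ℝ} (hw : w ∈ stdSimplex ℝ I)
    (f : I → ℝ) (c : ℝ) : ∑ i, w i * (f i + c) = (∑ i, w i * f i) + c := by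
  have h1 : ∑ i, w i * (f i + c) = (∑ i, w i * f i) + ∑ i, w i * c := by
    rw [← Finset.sum_add_distrib]
    exact Finset.sum_congr rfl fun _ _ => by ring
  rw [h1, ← Finset.sum_mul, hw.2, one_mul]

private lemma nonpos_of_le_discount {γ : ℝ} (hγ0 : 0 < γ) (hγ1 : γ < 1)
    (f : S × A → ℝ) (h : ∀ x, f x ≤ γ * ⨆ y, f y) : ∀ x, f x ≤ 0 := by
  have h1 : (⨆ y, f y) ≤ γ * ⨆ y, f y := ciSup_le h
  have h2 : (⨆ y, f y) ≤ 0 := by nlinarith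
  intro x
  have h3 := h x
  nlinarith

private lemma bellmanPol_sub (M : MDP S A) (pol X Y : S → A → ℝ) (s : S) (a : A) :
    bellmanPol M pol X s a - bellmanPol M pol Y s a
      = M.γ * ∑ s', M.p s a s' * ∑ a', pol s' a' * (X s' a' - Y s' a') := by
  simp only [bellmanPol]
  rw [add_sub_add_left_eq_sub, ← mul_sub, sum_mul_sub]
  congr 1
  refine Finset.sum_congr rfl fun s' _ => ?_
  rw [sum_mul_sub]

private lemma bellmanPol_mono (M : MDP S A) {pol : S → A → ℝ}
    (hpol : ∀ s, pol s ∈ stdSimplex ℝ A)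
    {X Y : S → A → ℝ} (h : ∀ s a, X s a ≤ Y s a) (s : S) (a : A) :
    bellmanPol M pol X s a ≤ bellmanPol M pol Y s a := by
  have h1 := bellmanPol_sub M pol X Y s a
  have hT : ∑ s', M.p s a s' * ∑ a', pol s' a' * (X s' a' - Y s' a') ≤ 0 :=
    wsum_le (M.hp s a) fun s' => wsum_le (hpol s') fun a' => by linarith [h s' a']
  nlinarith [M.hγ.1]

private lemma le_fixedPol (M : MDP S A) {pol X Y : S → A → ℝ}
    (hpol : ∀ s, pol s ∈ stdSimplex ℝ A)
    (hX : bellmanPol M pol X = X)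
    (hY : ∀ s a, Y s a ≤ bellmanPol M pol Y s a) :
    ∀ s a, Y s a ≤ X s a := by
  set f : S × A → ℝ := fun x => Y x.1 x.2 - X x.1 x.2 with hf
  have key : ∀ x, f x ≤ M.γ * ⨆ y, f y := by
    rintro ⟨s, a⟩
    have hfx : f (s, a) = Y s a - X s a := by simp [hf]
    have h1 : Y s a - X s a ≤ bellmanPol M pol Y s a - bellmanPol M pol X s a := by
      have h2 := hY s a
      have h3 : bellmanPol M pol X s a = X s a := congrFun (congrFun hX s) a
      linarith
    have h4 := bellmanPol_sub M pol Y X s a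
    have hT : ∑ s', M.p s a s' * ∑ a', pol s' a' * (Y s' a' - X s' a') ≤ ⨆ y, f y :=
      wsum_le (M.hp s a) fun s' => wsum_le (hpol s') fun a' => by
        have := le_fsup f (s', a'); simpa [hf] using this
    have h5 := mul_le_mul_of_nonneg_left hT M.hγ.1.le
    rw [hfx]
    linarith
  have hfin := nonpos_of_le_discount M.hγ.1 M.hγ.2 f key
  intro s a
  have := hfin (s, a)
  simp [hf] at this
  linarith

private lemma qpi_le_qstar (M : MDP S A) {pol Qp Qs : S → A → ℝ}
    (hpol : ∀ s, pol s ∈ stdSimplex ℝ A)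
    (hQp : bellmanPol M pol Qp = Qp) (hQs : bellmanOpt M Qs = Qs) :
    ∀ s a, Qp s a ≤ Qs s a := by
  set f : S × A → ℝ := fun x => Qp x.1 x.2 - Qs x.1 x.2 with hf
  have key : ∀ x, f x ≤ M.γ * ⨆ y, f y := by
    rintro ⟨s, a⟩
    have hfx : f (s, a) = Qp s a - Qs s a := by simp [hf]
    have h1 : Qp s a - Qs s a = bellmanPol M pol Qp s a - bellmanOpt M Qs s a := by
      rw [congrFun (congrFun hQp s) a, congrFun (congrFun hQs s) a]
    have h2 : bellmanPol M pol Qp s a - bellmanOpt M Qs s a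
        = M.γ * ∑ s', M.p s a s' * ((∑ a', pol s' a' * Qp s' a') - ⨆ a', Qs s' a') := by
      simp only [bellmanPol, bellmanOpt]
      rw [add_sub_add_left_eq_sub, ← mul_sub, sum_mul_sub]
    have hT : ∑ s', M.p s a s' * ((∑ a', pol s' a' * Qp s' a') - ⨆ a', Qs s' a')
        ≤ ⨆ y, f y := by
      refine wsum_le (M.hp s a) fun s' => ?_
      have hQsb : ∑ a', pol s' a' * Qs s' a' ≤ ⨆ a', Qs s' a' :=
        wsum_le (hpol s') fun a' => le_fsup (Qs s') a'
      have h3 : (∑ a', pol s' a' * Qp s' a') - ∑ a', pol s' a' * Qs s' a' ≤ ⨆ y, f y := by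
        rw [sum_mul_sub]
        refine wsum_le (hpol s') fun a' => ?_
        have := le_fsup f (s', a'); simpa [hf] using this
      linarith
    have h5 := mul_le_mul_of_nonneg_left hT M.hγ.1.le
    rw [hfx, h1, h2]
    linarith
  have hfin := nonpos_of_le_discount M.hγ.1 M.hγ.2 f key
  intro s a
  have := hfin (s, a)
  simp [hf] at this
  linarith

private lemma qstar_nonneg (M : MDP S A) {Qs : S → A → ℝ} (hQs : bellmanOpt M Qs = Qs) :
    ∀ s a, 0 ≤ Qs s a := by
  set f : S × A → ℝ := fun x => - Qs x.1 x.2 with hf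
  have key : ∀ x, f x ≤ M.γ * ⨆ y, f y := by
    rintro ⟨s, a⟩
    have hfx : f (s, a) = - Qs s a := by simp [hf]
    have h1 : - Qs s a = - bellmanOpt M Qs s a := by
      rw [congrFun (congrFun hQs s) a]
    have hT : ∑ s', M.p s a s' * (-(⨆ a', Qs s' a')) ≤ ⨆ y, f y := by
      refine wsum_le (M.hp s a) fun s' => ?_
      have h2 : Qs s' (Classical.arbitrary A) ≤ ⨆ a', Qs s' a' := le_fsup (Qs s') _
      have h3 : - Qs s' (Classical.arbitrary A) ≤ ⨆ y, f y := by
        have := le_fsup f (s', Classical.arbitrary A); simpa [hf] using this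
      linarith
    have hX : ∑ s', M.p s a s' * (-(⨆ a', Qs s' a'))
        = - ∑ s', M.p s a s' * (⨆ a', Qs s' a') := by
      rw [← Finset.sum_neg_distrib]
      exact Finset.sum_congr rfl fun _ _ => by ring
    have h5 := mul_le_mul_of_nonneg_left hT M.hγ.1.le
    rw [hX, mul_neg] at h5
    have hR := (M.hR s a).1
    rw [hfx, h1]
    simp only [bellmanOpt]
    linarith
  have hfin := nonpos_of_le_discount M.hγ.1 M.hγ.2 f key
  intro s a
  have := hfin (s, a)
  simp [hf] at this
  linarith

private lemma bddAbove_nu {ν : (A → ℝ) → ℝ} (hν_cont : ContinuousOn ν (stdSimplex ℝ A)) :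
    BddAbove (ν '' stdSimplex ℝ A) :=
  ((isCompact_stdSimplex ℝ A).image_of_continuousOn hν_cont).bddAbove

private lemma nu_le_nuMax {ν : (A → ℝ) → ℝ} (hν_cont : ContinuousOn ν (stdSimplex ℝ A))
    {μ : A → ℝ} (hμ : μ ∈ stdSimplex ℝ A) : ν μ ≤ nuMax ν :=
  le_csSup (bddAbove_nu hν_cont) ⟨μ, hμ, rfl⟩

private lemma bddAbove_smooth (ν : (A → ℝ) → ℝ) (hν_cont : ContinuousOn ν (stdSimplex ℝ A))
    {η : ℝ} (hη : 0 ≤ η) (q : A → ℝ) :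
    BddAbove (Set.range fun μ : stdSimplex ℝ A => ∑ a', μ.1 a' * q a' + η * ν μ.1) := by
  refine ⟨(⨆ a, q a) + η * nuMax ν, ?_⟩
  rintro _ ⟨μ, rfl⟩
  exact add_le_add (wsum_le μ.2 fun a => le_fsup q a)
    (mul_le_mul_of_nonneg_left (nu_le_nuMax hν_cont μ.2) hη)

private lemma smoothedPol_eq (M : MDP S A) (ν : (A → ℝ) → ℝ) (η : ℝ)
    (pol Q : S → A → ℝ) (s : S) (a : A) :
    smoothedPol M ν η pol Q s a
      = bellmanPol M pol Q s a + M.γ * η * ∑ s', M.p s a s' * ν (pol s') := by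
  have h : ∑ s', M.p s a s' * ((∑ a', pol s' a' * Q s' a') + η * ν (pol s'))
      = (∑ s', M.p s a s' * ∑ a', pol s' a' * Q s' a')
        + η * ∑ s', M.p s a s' * ν (pol s') := by
    rw [Finset.mul_sum, ← Finset.sum_add_distrib]
    exact Finset.sum_congr rfl fun _ _ => by ring
  simp only [smoothedPol, bellmanPol]
  rw [h]; ring

private lemma opt_le_smoothedOpt (M : MDP S A) (ν : (A → ℝ) → ℝ)
    (hν_cont : ContinuousOn ν (stdSimplex ℝ A))
    (hν_nonneg : ∀ μ ∈ stdSimplex ℝ A, 0 ≤ ν μ)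
    {η : ℝ} (hη : 0 ≤ η) (Q : S → A → ℝ) (s : S) (a : A) :
    bellmanOpt M Q s a ≤ smoothedOpt M ν η Q s a := by
  classical
  simp only [bellmanOpt, smoothedOpt]
  have h : ∀ s' : S, (⨆ a', Q s' a')
      ≤ ⨆ μ : stdSimplex ℝ A, (∑ a', μ.1 a' * Q s' a' + η * ν μ.1) := by
    intro s'
    refine ciSup_le fun a' => ?_
    have hmem : (fun b => if b = a' then (1:ℝ) else 0) ∈ stdSimplex ℝ A := by
      constructor
      · intro x; dsimp only; split <;> norm_num
      · simp
    have hsum : (∑ b, (if b = a' then (1:ℝ) else 0) * Q s' b) = Q s' a' := by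
      simp [ite_mul]
    have hval : Q s' a' ≤ (∑ b, (if b = a' then (1:ℝ) else 0) * Q s' b)
        + η * ν (fun b => if b = a' then (1:ℝ) else 0) := by
      rw [hsum]
      have := hν_nonneg _ hmem
      nlinarith
    refine hval.trans ?_
    exact le_ciSup (bddAbove_smooth ν hν_cont hη (Q s')) ⟨_, hmem⟩
  exact add_le_add_right
    (mul_le_mul_of_nonneg_left (wsum_mono (fun s' => (M.hp s a).1 s') h) M.hγ.1.le) _

private lemma eta_nonneg {τ : ℝ} (hτ : 0 ≤ τ) {β : ℕ → ℝ}
    (hβ : ∀ k ≥ 1, β k ∈ Set.Icc (0:ℝ) 1) (k : ℕ) : 0 ≤ eta τ β k := by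
  refine mul_nonneg hτ (Finset.prod_nonneg fun j hj => ?_)
  have := (hβ j (Finset.mem_Icc.mp hj).1).2
  linarith

private lemma eta_succ (τ : ℝ) (β : ℕ → ℝ) (m : ℕ) :
    eta τ β (m + 1) = (1 - β (m + 1)) * eta τ β m := by
  simp only [eta]
  rw [Finset.prod_Icc_succ_top (Nat.le_add_left 1 m)]
  ring

private lemma dspi_inv (M : MDP S A) (ν : (A → ℝ) → ℝ)
    (hν_cont : ContinuousOn ν (stdSimplex ℝ A))
    (hν_nonneg : ∀ μ ∈ stdSimplex ℝ A, 0 ≤ ν μ)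
    (τ : ℝ) (hτ : 0 ≤ τ) (β : ℕ → ℝ) (hβ0 : β 0 = 1)
    (hβ : ∀ k ≥ 1, β k ∈ Set.Icc (0:ℝ) 1) (D : DSPISeq M ν τ β) :
    ∀ k, 1 ≤ k → ∀ s a,
      D.Qbar k s a + M.γ * eta τ β (k - 1) * nuMax ν
        ≤ smoothedOpt M ν (eta τ β (k - 1)) (D.Qbar k) s a := by
  have hN : ∀ s, ν (D.pol 0 s) = nuMax ν := by
    intro s
    refine le_antisymm (nu_le_nuMax hν_cont (D.hpol 0 s)) ?_
    refine csSup_le ⟨ν (D.pol 0 s), ⟨D.pol 0 s, D.hpol 0 s, rfl⟩⟩ ?_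
    rintro _ ⟨μ, hμ, rfl⟩
    exact D.hpol0 s μ hμ
  refine Nat.le_induction ?_ ?_
  · -- base case k = 1
    intro s a
    simp only [Nat.sub_self]
    have heta0 : eta τ β 0 = τ := by simp [eta]
    have hQ1 : D.Qbar 1 = D.Qpi 0 := by
      rw [D.hQbarSucc 0, hβ0, D.hQbar0]; simp
    rw [hQ1, heta0]
    have hQfix : D.Qpi 0 s a = bellmanPol M (D.pol 0) (D.Qpi 0) s a :=
      (congrFun (congrFun (D.hQpi 0) s) a).symm
    have hlb : ∀ s', (∑ a', D.pol 0 s' a' * D.Qpi 0 s' a') + τ * nuMax ν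
        ≤ ⨆ μ : stdSimplex ℝ A, (∑ a', μ.1 a' * D.Qpi 0 s' a' + τ * ν μ.1) := by
      intro s'
      have h1 : (∑ a', D.pol 0 s' a' * D.Qpi 0 s' a') + τ * ν (D.pol 0 s')
          ≤ ⨆ μ : stdSimplex ℝ A, (∑ a', μ.1 a' * D.Qpi 0 s' a' + τ * ν μ.1) :=
        le_ciSup (bddAbove_smooth ν hν_cont hτ (D.Qpi 0 s')) ⟨D.pol 0 s', D.hpol 0 s'⟩
      rw [hN s'] at h1
      exact h1
    have hw : ∑ s', M.p s a s' * ((∑ a', D.pol 0 s' a' * D.Qpi 0 s' a') + τ * nuMax ν)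
        ≤ ∑ s', M.p s a s' *
            ⨆ μ : stdSimplex ℝ A, (∑ a', μ.1 a' * D.Qpi 0 s' a' + τ * ν μ.1) :=
      wsum_mono (fun s' => (M.hp s a).1 s') hlb
    rw [sum_mul_add_const (M.hp s a)] at hw
    rw [hQfix]
    simp only [bellmanPol, smoothedOpt]
    have h2 := mul_le_mul_of_nonneg_left hw M.hγ.1.le
    nlinarith
  · -- inductive step
    intro n hn IH
    obtain ⟨m, rfl⟩ : ∃ m, n = m + 1 := ⟨n - 1, by omega⟩
    intro s a
    simp only [Nat.add_sub_cancel]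
    have hb := hβ (m + 1) (by omega)
    have hη'0 : 0 ≤ eta τ β m := eta_nonneg hτ hβ m
    have hηk0 : 0 ≤ eta τ β (m + 1) := eta_nonneg hτ hβ (m + 1)
    have hpt : ∀ s' a', D.Qbar (m + 1 + 1) s' a'
        = (1 - β (m + 1)) * D.Qbar (m + 1) s' a' + β (m + 1) * D.Qpi (m + 1) s' a' := by
      intro s' a'
      rw [D.hQbarSucc (m + 1)]
      simp [smul_eq_mul]
    have key : (1 - β (m + 1)) * smoothedPol M ν (eta τ β m) (D.pol (m + 1)) (D.Qbar (m + 1)) s a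
        + β (m + 1) * bellmanPol M (D.pol (m + 1)) (D.Qpi (m + 1)) s a
        ≤ smoothedOpt M ν (eta τ β (m + 1)) (D.Qbar (m + 1 + 1)) s a := by
      have hper : ∀ s', (1 - β (m + 1)) * ((∑ a', D.pol (m + 1) s' a' * D.Qbar (m + 1) s' a')
              + eta τ β m * ν (D.pol (m + 1) s'))
            + β (m + 1) * (∑ a', D.pol (m + 1) s' a' * D.Qpi (m + 1) s' a')
          ≤ ⨆ μ : stdSimplex ℝ A,
              (∑ a', μ.1 a' * D.Qbar (m + 1 + 1) s' a' + eta τ β (m + 1) * ν μ.1) := by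
        intro s'
        have hval : (∑ a', D.pol (m + 1) s' a' * D.Qbar (m + 1 + 1) s' a')
              + eta τ β (m + 1) * ν (D.pol (m + 1) s')
            ≤ ⨆ μ : stdSimplex ℝ A,
              (∑ a', μ.1 a' * D.Qbar (m + 1 + 1) s' a' + eta τ β (m + 1) * ν μ.1) :=
          le_ciSup (bddAbove_smooth ν hν_cont hηk0 (D.Qbar (m + 1 + 1) s'))
            ⟨D.pol (m + 1) s', D.hpol (m + 1) s'⟩
        have hs : ∑ a', D.pol (m + 1) s' a' * D.Qbar (m + 1 + 1) s' a'
            = (1 - β (m + 1)) * (∑ a', D.pol (m + 1) s' a' * D.Qbar (m + 1) s' a')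
              + β (m + 1) * (∑ a', D.pol (m + 1) s' a' * D.Qpi (m + 1) s' a') := by
          rw [mix_wsum]
          refine Finset.sum_congr rfl fun a' _ => ?_
          rw [hpt s' a']
        have heq : (∑ a', D.pol (m + 1) s' a' * D.Qbar (m + 1 + 1) s' a')
              + eta τ β (m + 1) * ν (D.pol (m + 1) s')
            = (1 - β (m + 1)) * ((∑ a', D.pol (m + 1) s' a' * D.Qbar (m + 1) s' a')
                + eta τ β m * ν (D.pol (m + 1) s'))
              + β (m + 1) * (∑ a', D.pol (m + 1) s' a' * D.Qpi (m + 1) s' a') := by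
          rw [hs, eta_succ]
          ring
        rw [← heq]
        exact hval
      simp only [smoothedPol, bellmanPol, smoothedOpt]
      calc (1 - β (m + 1)) * (M.R s a + M.γ * ∑ s', M.p s a s' *
              ((∑ a', D.pol (m + 1) s' a' * D.Qbar (m + 1) s' a')
                + eta τ β m * ν (D.pol (m + 1) s')))
            + β (m + 1) * (M.R s a + M.γ * ∑ s', M.p s a s' *
              ∑ a', D.pol (m + 1) s' a' * D.Qpi (m + 1) s' a')
          = M.R s a + M.γ * ∑ s', M.p s a s' *
              ((1 - β (m + 1)) * ((∑ a', D.pol (m + 1) s' a' * D.Qbar (m + 1) s' a')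
                + eta τ β m * ν (D.pol (m + 1) s'))
              + β (m + 1) * (∑ a', D.pol (m + 1) s' a' * D.Qpi (m + 1) s' a')) := by
            rw [← mix_wsum (1 - β (m + 1)) (β (m + 1)) (M.p s a)
              (fun s' => (∑ a', D.pol (m + 1) s' a' * D.Qbar (m + 1) s' a')
                + eta τ β m * ν (D.pol (m + 1) s'))
              (fun s' => ∑ a', D.pol (m + 1) s' a' * D.Qpi (m + 1) s' a')]
            ring
        _ ≤ M.R s a + M.γ * ∑ s', M.p s a s' *
              ⨆ μ : stdSimplex ℝ A,
                (∑ a', μ.1 a' * D.Qbar (m + 1 + 1) s' a' + eta τ β (m + 1) * ν μ.1) := by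
            exact add_le_add_right (mul_le_mul_of_nonneg_left
              (wsum_mono (fun s' => (M.hp s a).1 s') hper) M.hγ.1.le) _
    rw [D.hgreedy m] at key
    rw [congrFun (congrFun (D.hQpi (m + 1)) s) a] at key
    have hIH := IH s a
    simp only [Nat.add_sub_cancel] at hIH
    have h1 : (1 - β (m + 1)) * (D.Qbar (m + 1) s a + M.γ * eta τ β m * nuMax ν)
        ≤ (1 - β (m + 1)) * smoothedOpt M ν (eta τ β m) (D.Qbar (m + 1)) s a :=
      mul_le_mul_of_nonneg_left hIH (by linarith [hb.2])
    have h2 : D.Qbar (m + 1 + 1) s a + M.γ * eta τ β (m + 1) * nuMax ν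
        = (1 - β (m + 1)) * (D.Qbar (m + 1) s a + M.γ * eta τ β m * nuMax ν)
          + β (m + 1) * D.Qpi (m + 1) s a := by
      rw [hpt s a, eta_succ]
      ring
    rw [h2]
    linarith
end DSPIHelpers

section DSPIHelpers2

private lemma qbar_le_bellman (M : MDP S A) (ν : (A → ℝ) → ℝ)
    (hν_cont : ContinuousOn ν (stdSimplex ℝ A))
    (hν_nonneg : ∀ μ ∈ stdSimplex ℝ A, 0 ≤ ν μ)
    (τ : ℝ) (hτ : 0 ≤ τ) (β : ℕ → ℝ) (hβ0 : β 0 = 1)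
    (hβ : ∀ k ≥ 1, β k ∈ Set.Icc (0:ℝ) 1) (D : DSPISeq M ν τ β) :
    ∀ k, 1 ≤ k → ∀ s a, D.Qbar k s a ≤ bellmanPol M (D.pol k) (D.Qbar k) s a := by
  intro k hk s a
  obtain ⟨m, rfl⟩ : ∃ m, k = m + 1 := ⟨k - 1, by omega⟩
  have hinv := dspi_inv M ν hν_cont hν_nonneg τ hτ β hβ0 hβ D (m + 1) (by omega) s a
  simp only [Nat.add_sub_cancel] at hinv
  rw [← D.hgreedy m, smoothedPol_eq] at hinv
  have hν_bound : ∑ s', M.p s a s' * ν (D.pol (m + 1) s') ≤ nuMax ν :=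
    wsum_le (M.hp s a) fun s' => nu_le_nuMax hν_cont (D.hpol (m + 1) s')
  have hη'0 : 0 ≤ eta τ β m := eta_nonneg hτ hβ m
  have hmul := mul_le_mul_of_nonneg_left hν_bound (mul_nonneg M.hγ.1.le hη'0)
  linarith

private lemma qbar_le_qpi (M : MDP S A) (ν : (A → ℝ) → ℝ)
    (hν_cont : ContinuousOn ν (stdSimplex ℝ A))
    (hν_nonneg : ∀ μ ∈ stdSimplex ℝ A, 0 ≤ ν μ)
    (τ : ℝ) (hτ : 0 ≤ τ) (β : ℕ → ℝ) (hβ0 : β 0 = 1)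
    (hβ : ∀ k ≥ 1, β k ∈ Set.Icc (0:ℝ) 1) (D : DSPISeq M ν τ β) :
    ∀ k, 1 ≤ k → ∀ s a, D.Qbar k s a ≤ D.Qpi k s a := fun k hk =>
  le_fixedPol M (D.hpol k) (D.hQpi k)
    (qbar_le_bellman M ν hν_cont hν_nonneg τ hτ β hβ0 hβ D k hk)

private lemma qbar_le_qstar (M : MDP S A) (ν : (A → ℝ) → ℝ)
    (τ : ℝ) (β : ℕ → ℝ) (hβ0 : β 0 = 1)
    (hβ : ∀ k ≥ 1, β k ∈ Set.Icc (0:ℝ) 1) (D : DSPISeq M ν τ β)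
    {Qstar : S → A → ℝ} (hQstar : bellmanOpt M Qstar = Qstar) :
    ∀ k s a, D.Qbar k s a ≤ Qstar s a := by
  intro k
  induction k with
  | zero =>
    intro s a
    rw [D.hQbar0]
    simpa using qstar_nonneg M hQstar s a
  | succ k IH =>
    intro s a
    have hbk : β k ∈ Set.Icc (0:ℝ) 1 := by
      rcases Nat.eq_zero_or_pos k with h | h
      · subst h; rw [hβ0]; exact ⟨zero_le_one, le_refl 1⟩
      · exact hβ k h
    have hqpi := qpi_le_qstar M (D.hpol k) (D.hQpi k) hQstar s a
    have hIH := IH s a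
    have hpt : D.Qbar (k + 1) s a
        = (1 - β k) * D.Qbar k s a + β k * D.Qpi k s a := by
      rw [D.hQbarSucc k]
      simp [smul_eq_mul]
    rw [hpt]
    nlinarith [hbk.1, hbk.2]

end DSPIHelpers2

/-- **Contractive recursion for DSPI** (Lemma 2). -/
theorem dspi_contractive_recursion
    (M : MDP S A)
    (ν : (A → ℝ) → ℝ)
    (hν_cont : ContinuousOn ν (stdSimplex ℝ A))
    (hν_nonneg : ∀ μ ∈ stdSimplex ℝ A, 0 ≤ ν μ)
    (hν_conc : ConcaveOn ℝ (stdSimplex ℝ A) ν)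
    (τ : ℝ) (hτ : 0 ≤ τ)
    (β : ℕ → ℝ) (hβ0 : β 0 = 1) (hβ : ∀ k ≥ 1, β k ∈ Set.Icc (0 : ℝ) 1)
    (D : DSPISeq M ν τ β)
    (Qstar : S → A → ℝ) (hQstar : bellmanOpt M Qstar = Qstar) :
    ∀ k ≥ 1,
      supNormQ (Qstar - D.Qbar (k + 1))
        ≤ (1 - (1 - M.γ) * β k) * supNormQ (Qstar - D.Qbar k)
          + M.γ * β k * eta τ β (k - 1) * nuMax ν := by
  intro k hk
  obtain ⟨m, rfl⟩ : ∃ m, k = m + 1 := ⟨k - 1, by omega⟩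
  simp only [Nat.add_sub_cancel]
  have hb := hβ (m + 1) (by omega)
  have hη'0 : 0 ≤ eta τ β m := eta_nonneg hτ hβ m
  have hQle : ∀ s a, D.Qbar (m + 1) s a ≤ Qstar s a :=
    qbar_le_qstar M ν τ β hβ0 hβ D hQstar (m + 1)
  have hQle2 : ∀ s a, D.Qbar (m + 1 + 1) s a ≤ Qstar s a :=
    qbar_le_qstar M ν τ β hβ0 hβ D hQstar (m + 1 + 1)
  have hub : ∀ s a, Qstar s a - D.Qbar (m + 1) s a ≤ supNormQ (Qstar - D.Qbar (m + 1)) := by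
    intro s a
    have h1 : |Qstar s a - D.Qbar (m + 1) s a| ≤ supNormQ (Qstar - D.Qbar (m + 1)) := by
      have h2 := le_fsup (fun x : S × A => |(Qstar - D.Qbar (m + 1)) x.1 x.2|) (s, a)
      simpa [supNormQ] using h2
    exact (le_abs_self _).trans h1
  have hsup : ∀ s', (⨆ a', Qstar s' a')
      ≤ (⨆ a', D.Qbar (m + 1) s' a') + supNormQ (Qstar - D.Qbar (m + 1)) := by
    intro s'
    refine ciSup_le fun a' => ?_
    have h1 := le_fsup (D.Qbar (m + 1) s') a'
    have h2 := hub s' a'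
    linarith
  have t1 : ∀ s a, bellmanOpt M Qstar s a - bellmanOpt M (D.Qbar (m + 1)) s a
      ≤ M.γ * supNormQ (Qstar - D.Qbar (m + 1)) := by
    intro s a
    have hdiff : bellmanOpt M Qstar s a - bellmanOpt M (D.Qbar (m + 1)) s a
        = M.γ * ∑ s', M.p s a s' * ((⨆ a', Qstar s' a') - ⨆ a', D.Qbar (m + 1) s' a') := by
      simp only [bellmanOpt]
      rw [add_sub_add_left_eq_sub, ← mul_sub, sum_mul_sub]
    rw [hdiff]
    refine mul_le_mul_of_nonneg_left (wsum_le (M.hp s a) fun s' => ?_) M.hγ.1.le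
    linarith [hsup s']
  have t2 : ∀ s a, bellmanOpt M (D.Qbar (m + 1)) s a
      ≤ bellmanPol M (D.pol (m + 1)) (D.Qbar (m + 1)) s a
        + M.γ * eta τ β m * nuMax ν := by
    intro s a
    have h1 := opt_le_smoothedOpt M ν hν_cont hν_nonneg hη'0 (D.Qbar (m + 1)) s a
    rw [← D.hgreedy m, smoothedPol_eq] at h1
    have hν_bound : ∑ s', M.p s a s' * ν (D.pol (m + 1) s') ≤ nuMax ν :=
      wsum_le (M.hp s a) fun s' => nu_le_nuMax hν_cont (D.hpol (m + 1) s')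
    have hmul := mul_le_mul_of_nonneg_left hν_bound (mul_nonneg M.hγ.1.le hη'0)
    linarith
  have hle := qbar_le_qpi M ν hν_cont hν_nonneg τ hτ β hβ0 hβ D (m + 1) (by omega)
  have t3 : ∀ s a, bellmanPol M (D.pol (m + 1)) (D.Qbar (m + 1)) s a ≤ D.Qpi (m + 1) s a := by
    intro s a
    have h1 := bellmanPol_mono M (D.hpol (m + 1)) hle s a
    rwa [congrFun (congrFun (D.hQpi (m + 1)) s) a] at h1
  have hQQ : ∀ s a, Qstar s a - D.Qpi (m + 1) s a
      ≤ M.γ * supNormQ (Qstar - D.Qbar (m + 1)) + M.γ * eta τ β m * nuMax ν := by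
    intro s a
    have h0 : Qstar s a = bellmanOpt M Qstar s a := (congrFun (congrFun hQstar s) a).symm
    linarith [t1 s a, t2 s a, t3 s a]
  have hfin : ∀ x : S × A, |(Qstar - D.Qbar (m + 1 + 1)) x.1 x.2|
      ≤ (1 - (1 - M.γ) * β (m + 1)) * supNormQ (Qstar - D.Qbar (m + 1))
        + M.γ * β (m + 1) * eta τ β m * nuMax ν := by
    rintro ⟨s, a⟩
    have happ : (Qstar - D.Qbar (m + 1 + 1)) s a = Qstar s a - D.Qbar (m + 1 + 1) s a := rfl
    have hnn : 0 ≤ Qstar s a - D.Qbar (m + 1 + 1) s a := by linarith [hQle2 s a]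
    have hpt : D.Qbar (m + 1 + 1) s a
        = (1 - β (m + 1)) * D.Qbar (m + 1) s a + β (m + 1) * D.Qpi (m + 1) s a := by
      rw [D.hQbarSucc (m + 1)]
      simp [smul_eq_mul]
    have e1 : Qstar s a - D.Qbar (m + 1 + 1) s a
        = (1 - β (m + 1)) * (Qstar s a - D.Qbar (m + 1) s a)
          + β (m + 1) * (Qstar s a - D.Qpi (m + 1) s a) := by
      rw [hpt]; ring
    have c1 : (1 - β (m + 1)) * (Qstar s a - D.Qbar (m + 1) s a)
        ≤ (1 - β (m + 1)) * supNormQ (Qstar - D.Qbar (m + 1)) :=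
      mul_le_mul_of_nonneg_left (hub s a) (by linarith [hb.2])
    have c2 : β (m + 1) * (Qstar s a - D.Qpi (m + 1) s a)
        ≤ β (m + 1) * (M.γ * supNormQ (Qstar - D.Qbar (m + 1))
            + M.γ * eta τ β m * nuMax ν) :=
      mul_le_mul_of_nonneg_left (hQQ s a) hb.1
    calc |(Qstar - D.Qbar (m + 1 + 1)) s a| = Qstar s a - D.Qbar (m + 1 + 1) s a := by
          rw [happ]; exact abs_of_nonneg hnn
      _ = (1 - β (m + 1)) * (Qstar s a - D.Qbar (m + 1) s a)
          + β (m + 1) * (Qstar s a - D.Qpi (m + 1) s a) := e1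
      _ ≤ (1 - β (m + 1)) * supNormQ (Qstar - D.Qbar (m + 1))
          + β (m + 1) * (M.γ * supNormQ (Qstar - D.Qbar (m + 1))
            + M.γ * eta τ β m * nuMax ν) := add_le_add c1 c2
      _ = (1 - (1 - M.γ) * β (m + 1)) * supNormQ (Qstar - D.Qbar (m + 1))
          + M.γ * β (m + 1) * eta τ β m * nuMax ν := by ring
  exact ciSup_le hfin
end
end

section
/- Bound on the averaged iterates in approximate DSPI: let ε ≥ 0 and let (π_k, W_k*, W̄_k) be an approximate DSPI sequence with stepsizes β_0 = 1 and β_k = β ∈ (0,1] for all k ≥ 1. Then for every k ≥ 1, W̄_k ≤ Q^{π_k} + δ_k · 1 componentwise, where δ_k = ((1+γ)/(1−γ)) · ε · Σ_{i=0}^{k−1} (1−β)^i and 1 denotes the all-ones vector in ℝ^{S×A}. -/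
open Finset

noncomputable section

variable {S A : Type*} [Fintype S] [Fintype A] [Nonempty S] [Nonempty A]

/-- An approximate DSPI sequence: `W k` approximates `Q^{π_k}` within `ε` in sup-norm,
and `Wbar k` is the running average used for the regularized greedy step. -/
structure ApproxDSPISeq (M : MDP S A) (ν : (A → ℝ) → ℝ) (τ : ℝ) (β : ℕ → ℝ) (ε : ℝ) where
  pol : ℕ → S → A → ℝ
  Qpi : ℕ → S → A → ℝ
  W : ℕ → S → A → ℝ
  Wbar : ℕ → S → A → ℝ
  hpol : ∀ k s, pol k s ∈ stdSimplex ℝ A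
  hQpi : ∀ k, bellmanPol M (pol k) (Qpi k) = Qpi k
  hW : ∀ k, supNormQ (W k - Qpi k) ≤ ε
  hpol0 : ∀ s, ∀ μ ∈ stdSimplex ℝ A, ν μ ≤ ν (pol 0 s)
  hWbar0 : Wbar 0 = 0
  hWbarSucc : ∀ k, Wbar (k + 1) = (1 - β k) • Wbar k + β k • W k
  hgreedy : ∀ k, smoothedPol M ν (eta τ β k) (pol (k + 1)) (Wbar (k + 1))
      = smoothedOpt M ν (eta τ β k) (Wbar (k + 1))


/-- Weighted-sum comparison with slack: if `f ≤ g + ε` pointwise and the weights form a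
probability vector, then the weighted averages differ by at most `ε`. -/
lemma wdot_le_eps {ι : Type*} [Fintype ι] {w f g : ι → ℝ} {ε : ℝ}
    (hw : ∀ i, 0 ≤ w i) (hw1 : ∑ i, w i = 1)
    (h : ∀ i, f i ≤ g i + ε) : ∑ i, w i * f i ≤ (∑ i, w i * g i) + ε := by
  calc ∑ i, w i * f i ≤ ∑ i, w i * (g i + ε) :=
        Finset.sum_le_sum fun i _ => mul_le_mul_of_nonneg_left (h i) (hw i)
    _ = (∑ i, w i * g i) + (∑ i, w i) * ε := by
        rw [Finset.sum_mul, ← Finset.sum_add_distrib]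
        exact Finset.sum_congr rfl fun i _ => by ring
    _ = (∑ i, w i * g i) + ε := by rw [hw1, one_mul]

lemma supNormQ_pointwise {f : S → A → ℝ} {ε : ℝ} (h : supNormQ f ≤ ε) :
    ∀ s a, |f s a| ≤ ε := by
  intro s a
  unfold supNormQ at h
  have hbd : BddAbove (Set.range fun x : S × A => |f x.1 x.2|) :=
    Set.Finite.bddAbove (Set.finite_range _)
  exact le_trans (le_ciSup hbd ((⟨s, a⟩ : S × A))) h

/-- The regularized value of any distribution `μ0` is at most the smoothed supremum. -/
lemma le_smoothSup (ν : (A → ℝ) → ℝ) (hν_cont : ContinuousOn ν (stdSimplex ℝ A))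
    (Q : A → ℝ) (η : ℝ) {μ0 : A → ℝ} (h : μ0 ∈ stdSimplex ℝ A) :
    ∑ a', μ0 a' * Q a' + η * ν μ0
      ≤ ⨆ μ : stdSimplex ℝ A, (∑ a', μ.1 a' * Q a' + η * ν μ.1) := by
  have hco : ContinuousOn (fun μ : A → ℝ => ∑ a', μ a' * Q a' + η * ν μ) (stdSimplex ℝ A) := by
    apply ContinuousOn.add
    · exact (continuous_finset_sum _ fun a _ => (continuous_apply a).mul continuous_const).continuousOn
    · exact continuousOn_const.mul hν_cont
  have hbdd : BddAbove (Set.range fun μ : stdSimplex ℝ A =>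
      (∑ a', μ.1 a' * Q a' + η * ν μ.1)) := by
    obtain ⟨C, hC⟩ := (isCompact_stdSimplex ℝ A).bddAbove_image hco
    refine ⟨C, ?_⟩
    rintro x ⟨μ, rfl⟩
    exact hC ⟨μ.1, μ.2, rfl⟩
  exact le_ciSup hbdd (⟨μ0, h⟩ : stdSimplex ℝ A)

/-- The portion of the greedy condition we need: the regularized greedy policy `pol (k+1)`
beats any other policy `ρ` in weighted regularized value. -/
lemma greedy_ge (M : MDP S A) (ν : (A → ℝ) → ℝ)
    (hν_cont : ContinuousOn ν (stdSimplex ℝ A))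
    (τ : ℝ) (β : ℕ → ℝ) (ε : ℝ) (D : ApproxDSPISeq M ν τ β ε)
    (k : ℕ) (s : S) (a : A) (ρ : S → A → ℝ) (hρ : ∀ s', ρ s' ∈ stdSimplex ℝ A) :
    ∑ s', M.p s a s' * (∑ a', ρ s' a' * D.Wbar (k+1) s' a' + eta τ β k * ν (ρ s'))
      ≤ ∑ s', M.p s a s' *
          (∑ a', D.pol (k+1) s' a' * D.Wbar (k+1) s' a' + eta τ β k * ν (D.pol (k+1) s')) := by
  have h := congrFun (congrFun (D.hgreedy k) s) a
  unfold smoothedPol smoothedOpt at h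
  have hγ : (0:ℝ) < M.γ := M.hγ.1
  have h2 : ∑ s', M.p s a s' *
      (∑ a', D.pol (k+1) s' a' * D.Wbar (k+1) s' a' + eta τ β k * ν (D.pol (k+1) s'))
      = ∑ s', M.p s a s' *
        (⨆ μ : stdSimplex ℝ A, (∑ a', μ.1 a' * D.Wbar (k+1) s' a' + eta τ β k * ν μ.1)) :=
    mul_left_cancel₀ (ne_of_gt hγ) (by linarith)
  rw [h2]
  exact Finset.sum_le_sum fun s' _ =>
    mul_le_mul_of_nonneg_left (le_smoothSup ν hν_cont _ _ (hρ s')) ((M.hp s a).1 s')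

/-- Approximate policy improvement in weighted form: the next policy is at least as good as the
current one when evaluated on `W k`, averaged by any transition distribution. -/
lemma improve_step (M : MDP S A) (ν : (A → ℝ) → ℝ)
    (hν_cont : ContinuousOn ν (stdSimplex ℝ A))
    (τ : ℝ) (hτ : 0 ≤ τ)
    (b : ℝ) (hb : b ∈ Set.Ioc (0 : ℝ) 1)
    (β : ℕ → ℝ) (hβ0 : β 0 = 1) (hβ : ∀ k ≥ 1, β k = b)
    (ε : ℝ) (D : ApproxDSPISeq M ν τ β ε) (k : ℕ) (s : S) (a : A) :
    ∑ s', M.p s a s' * (∑ a', D.pol k s' a' * D.W k s' a')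
      ≤ ∑ s', M.p s a s' * (∑ a', D.pol (k+1) s' a' * D.W k s' a') := by
  have hpnn : ∀ s', 0 ≤ M.p s a s' := (M.hp s a).1
  match k with
  | 0 =>
    have hW1 : D.Wbar 1 = D.W 0 := by
      rw [D.hWbarSucc 0, D.hWbar0, hβ0]; funext s' a'; simp
    have hη0 : eta τ β 0 = τ := by simp [eta]
    have hg := greedy_ge M ν hν_cont τ β ε D 0 s a (D.pol 0) (fun s' => D.hpol 0 s')
    rw [hW1, hη0] at hg
    simp only [mul_add, Finset.sum_add_distrib] at hg
    have hν : ∑ s', M.p s a s' * (τ * ν (D.pol 1 s'))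
        ≤ ∑ s', M.p s a s' * (τ * ν (D.pol 0 s')) := by
      refine Finset.sum_le_sum fun s' _ => mul_le_mul_of_nonneg_left
        (mul_le_mul_of_nonneg_left (D.hpol0 s' (D.pol 1 s') (D.hpol 1 s')) hτ) (hpnn s')
    linarith
  | (m+1) =>
    have h1b : (0:ℝ) ≤ 1 - b := by linarith [hb.2]
    have hβm : β (m+1) = b := hβ (m+1) (by omega)
    have hWs : ∀ s' a', D.Wbar (m+2) s' a'
        = (1-b) * D.Wbar (m+1) s' a' + b * D.W (m+1) s' a' := by
      intro s' a'; rw [D.hWbarSucc (m+1), hβm]; simp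
    have hηs : eta τ β (m+1) = (1-b) * eta τ β m := by
      unfold eta
      rw [Finset.prod_Icc_succ_top (by omega : 1 ≤ m+1), hβm]; ring
    have expand : ∀ ρ : S → A → ℝ,
        ∑ s', M.p s a s' * (∑ a', ρ s' a' * D.Wbar (m+2) s' a' + eta τ β (m+1) * ν (ρ s'))
        = (1-b) * (∑ s', M.p s a s' * (∑ a', ρ s' a' * D.Wbar (m+1) s' a'))
          + b * (∑ s', M.p s a s' * (∑ a', ρ s' a' * D.W (m+1) s' a'))
          + (1-b) * (∑ s', M.p s a s' * (eta τ β m * ν (ρ s'))) := by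
      intro ρ
      rw [Finset.mul_sum, Finset.mul_sum, Finset.mul_sum,
        ← Finset.sum_add_distrib, ← Finset.sum_add_distrib]
      refine Finset.sum_congr rfl fun s' _ => ?_
      have hin : ∑ a', ρ s' a' * D.Wbar (m+2) s' a'
          = (1-b) * (∑ a', ρ s' a' * D.Wbar (m+1) s' a')
            + b * (∑ a', ρ s' a' * D.W (m+1) s' a') := by
        rw [Finset.mul_sum, Finset.mul_sum, ← Finset.sum_add_distrib]
        refine Finset.sum_congr rfl fun a' _ => ?_
        rw [hWs s' a']; ring
      rw [hin, hηs]; ring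
    have hA := greedy_ge M ν hν_cont τ β ε D (m+1) s a (D.pol (m+1)) (fun s' => D.hpol (m+1) s')
    have hB := greedy_ge M ν hν_cont τ β ε D m s a (D.pol (m+2)) (fun s' => D.hpol (m+2) s')
    rw [expand, expand] at hA
    simp only [mul_add, Finset.sum_add_distrib] at hB
    have hB' := mul_le_mul_of_nonneg_left hB h1b
    have hbb : b * (∑ s', M.p s a s' * (∑ a', D.pol (m+1) s' a' * D.W (m+1) s' a'))
        ≤ b * (∑ s', M.p s a s' * (∑ a', D.pol (m+2) s' a' * D.W (m+1) s' a')) := by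
      nlinarith [hA, hB']
    exact le_of_mul_le_mul_left hbb hb.1

/-- Approximate policy improvement on the `Q`-functions. -/
lemma qpi_improve (M : MDP S A) (ν : (A → ℝ) → ℝ)
    (hν_cont : ContinuousOn ν (stdSimplex ℝ A))
    (τ : ℝ) (hτ : 0 ≤ τ)
    (ε : ℝ) (hε : 0 ≤ ε)
    (b : ℝ) (hb : b ∈ Set.Ioc (0 : ℝ) 1)
    (β : ℕ → ℝ) (hβ0 : β 0 = 1) (hβ : ∀ k ≥ 1, β k = b)
    (D : ApproxDSPISeq M ν τ β ε) (k : ℕ) :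
    ∀ s a, D.Qpi k s a ≤ D.Qpi (k+1) s a + 2 * M.γ * ε / (1 - M.γ) := by
  have hγ0 : (0:ℝ) < M.γ := M.hγ.1
  have hγ1 : M.γ < 1 := M.hγ.2
  obtain ⟨x0, hx0⟩ := Finite.exists_max (fun x : S × A => D.Qpi k x.1 x.2 - D.Qpi (k+1) x.1 x.2)
  have hx0' : ∀ s a', D.Qpi k s a' - D.Qpi (k+1) s a'
      ≤ D.Qpi k x0.1 x0.2 - D.Qpi (k+1) x0.1 x0.2 := fun s a' => hx0 ⟨s, a'⟩
  set m := D.Qpi k x0.1 x0.2 - D.Qpi (k+1) x0.1 x0.2 with hm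
  have hWQ : ∀ j s' a', |D.W j s' a' - D.Qpi j s' a'| ≤ ε := by
    intro j s' a'
    have := supNormQ_pointwise (D.hW j) s' a'
    simpa using this
  have key : m ≤ 2 * M.γ * ε / (1 - M.γ) := by
    set s0 := x0.1
    set a0 := x0.2
    have hpnn : ∀ s', 0 ≤ M.p s0 a0 s' := (M.hp s0 a0).1
    have hp1 : ∑ s', M.p s0 a0 s' = 1 := (M.hp s0 a0).2
    have dotle : ∀ (j : ℕ) (i : ℕ) (s' : S),
        ∑ a', D.pol i s' a' * D.Qpi j s' a' ≤ (∑ a', D.pol i s' a' * D.W j s' a') + ε := by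
      intro j i s'
      refine wdot_le_eps (fun a' => (D.hpol i s').1 a') (D.hpol i s').2 fun a' => ?_
      have := abs_le.1 (hWQ j s' a')
      linarith [this.1]
    have dotge : ∀ (j : ℕ) (i : ℕ) (s' : S),
        ∑ a', D.pol i s' a' * D.W j s' a' ≤ (∑ a', D.pol i s' a' * D.Qpi j s' a') + ε := by
      intro j i s'
      refine wdot_le_eps (fun a' => (D.hpol i s').1 a') (D.hpol i s').2 fun a' => ?_
      have := abs_le.1 (hWQ j s' a')
      linarith [this.2]
    have c1 : ∑ s', M.p s0 a0 s' * (∑ a', D.pol k s' a' * D.Qpi k s' a')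
        ≤ (∑ s', M.p s0 a0 s' * (∑ a', D.pol k s' a' * D.W k s' a')) + ε :=
      wdot_le_eps hpnn hp1 (dotle k k)
    have c2 := improve_step M ν hν_cont τ hτ b hb β hβ0 hβ ε D k s0 a0
    have c3 : ∑ s', M.p s0 a0 s' * (∑ a', D.pol (k+1) s' a' * D.W k s' a')
        ≤ (∑ s', M.p s0 a0 s' * (∑ a', D.pol (k+1) s' a' * D.Qpi k s' a')) + ε :=
      wdot_le_eps hpnn hp1 (dotge k (k+1))
    have c4 : ∑ s', M.p s0 a0 s' * (∑ a', D.pol (k+1) s' a' * D.Qpi k s' a')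
        ≤ (∑ s', M.p s0 a0 s' * (∑ a', D.pol (k+1) s' a' * D.Qpi (k+1) s' a')) + m := by
      refine wdot_le_eps hpnn hp1 fun s' => ?_
      refine wdot_le_eps (fun a' => (D.hpol (k+1) s').1 a') (D.hpol (k+1) s').2 fun a' => ?_
      linarith [hx0' s' a']
    have e1 : D.Qpi k s0 a0 = M.R s0 a0
        + M.γ * ∑ s', M.p s0 a0 s' * (∑ a', D.pol k s' a' * D.Qpi k s' a') :=
      (congrFun (congrFun (D.hQpi k) s0) a0).symm
    have e2 : D.Qpi (k+1) s0 a0 = M.R s0 a0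
        + M.γ * ∑ s', M.p s0 a0 s' * (∑ a', D.pol (k+1) s' a' * D.Qpi (k+1) s' a') :=
      (congrFun (congrFun (D.hQpi (k+1)) s0) a0).symm
    have hmle : m ≤ M.γ * (2 * ε + m) := by
      have heq : m = M.γ * ((∑ s', M.p s0 a0 s' * (∑ a', D.pol k s' a' * D.Qpi k s' a'))
          - (∑ s', M.p s0 a0 s' * (∑ a', D.pol (k+1) s' a' * D.Qpi (k+1) s' a'))) := by
        rw [hm, e1, e2]; ring
      have hsum : (∑ s', M.p s0 a0 s' * (∑ a', D.pol k s' a' * D.Qpi k s' a'))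
          - (∑ s', M.p s0 a0 s' * (∑ a', D.pol (k+1) s' a' * D.Qpi (k+1) s' a'))
          ≤ 2 * ε + m := by linarith
      calc m = M.γ * ((∑ s', M.p s0 a0 s' * (∑ a', D.pol k s' a' * D.Qpi k s' a'))
          - (∑ s', M.p s0 a0 s' * (∑ a', D.pol (k+1) s' a' * D.Qpi (k+1) s' a'))) := heq
        _ ≤ M.γ * (2 * ε + m) := mul_le_mul_of_nonneg_left hsum (le_of_lt hγ0)
    rw [le_div_iff₀ (by linarith : (0:ℝ) < 1 - M.γ)]
    nlinarith
  intro s a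
  linarith [hx0' s a]

/-- **Bound on the averaged iterates in approximate DSPI** (Corollary 3). -/
theorem approx_dspi_Wbar_bound
    (M : MDP S A)
    (ν : (A → ℝ) → ℝ)
    (hν_cont : ContinuousOn ν (stdSimplex ℝ A))
    (hν_nonneg : ∀ μ ∈ stdSimplex ℝ A, 0 ≤ ν μ)
    (hν_conc : ConcaveOn ℝ (stdSimplex ℝ A) ν)
    (τ : ℝ) (hτ : 0 ≤ τ)
    (ε : ℝ) (hε : 0 ≤ ε)
    (b : ℝ) (hb : b ∈ Set.Ioc (0 : ℝ) 1)
    (β : ℕ → ℝ) (hβ0 : β 0 = 1) (hβ : ∀ k ≥ 1, β k = b)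
    (D : ApproxDSPISeq M ν τ β ε) :
    ∀ k ≥ 1, ∀ s a,
      D.Wbar k s a
        ≤ D.Qpi k s a
          + ((1 + M.γ) / (1 - M.γ)) * ε * ∑ i ∈ Finset.range k, (1 - b) ^ i := by
  have hγ0 : (0:ℝ) < M.γ := M.hγ.1
  have hγ1 : M.γ < 1 := M.hγ.2
  have h1γ : (0:ℝ) < 1 - M.γ := by linarith
  have hWQ : ∀ j s' a', |D.W j s' a' - D.Qpi j s' a'| ≤ ε := by
    intro j s' a'
    have := supNormQ_pointwise (D.hW j) s' a'
    simpa using this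
  have hc : (1 + M.γ) / (1 - M.γ) * ε = ε + 2 * M.γ * ε / (1 - M.γ) := by
    field_simp; ring
  have hq := qpi_improve M ν hν_cont τ hτ ε hε b hb β hβ0 hβ D
  intro k hk
  induction k, hk using Nat.le_induction with
  | base =>
    intro s a
    have hW1 : D.Wbar 1 = D.W 0 := by
      rw [D.hWbarSucc 0, D.hWbar0, hβ0]; funext s' a'; simp
    rw [hW1]
    have h1 := abs_le.1 (hWQ 0 s a)
    have h2 := hq 0 s a
    simp only [Finset.range_one, Finset.sum_singleton, pow_zero]
    rw [mul_one, hc]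
    linarith [h1.2]
  | succ n hn ih =>
    intro s a
    have hβn : β n = b := hβ n hn
    have h1b : (0:ℝ) ≤ 1 - b := by linarith [hb.2]
    have hWn : D.Wbar (n+1) s a = (1-b) * D.Wbar n s a + b * D.W n s a := by
      rw [D.hWbarSucc n, hβn]; simp
    have hih := mul_le_mul_of_nonneg_left (ih s a) h1b
    have hW : D.W n s a ≤ D.Qpi n s a + ε := by linarith [(abs_le.1 (hWQ n s a)).2]
    have hWb := mul_le_mul_of_nonneg_left hW (le_of_lt hb.1)
    have hqn := hq n s a
    have hgeom : ∑ i ∈ Finset.range (n+1), (1-b) ^ i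
        = (1-b) * ∑ i ∈ Finset.range n, (1-b) ^ i + 1 := geom_sum_succ
    have hbe : b * ε ≤ ε := by nlinarith [hb.2]
    rw [hWn, hgeom]
    have hexp : (1 + M.γ) / (1 - M.γ) * ε * ((1-b) * ∑ i ∈ Finset.range n, (1-b) ^ i + 1)
        = (1-b) * ((1 + M.γ) / (1 - M.γ) * ε * ∑ i ∈ Finset.range n, (1-b) ^ i)
          + (1 + M.γ) / (1 - M.γ) * ε := by ring
    rw [hexp]
    linarith [hih, hWb, hqn, hc, hbe]
end
end

section
/- Almost contractive recursion for approximate DSPI: let ε ≥ 0 and let (π_k, W_k*, W̄_k) be an approximate DSPI sequence with stepsizes β_0 = 1 and β_k = β ∈ (0,1] for all k ≥ 1. Then for every k ≥ 1, ‖Q* − W̄_{k+1}‖∞ ≤ (1 − β(1−γ)) ‖Q* − W̄_k‖∞ + β γ ν_max η_{k−1} + β γ δ_k + β ε, where η_{k−1} = τ(1−β)^{k−1} and δ_k = ((1+γ)/(1−γ)) · ε · Σ_{i=0}^{k−1} (1−β)^i. -/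
open Finset

noncomputable section

variable {S A : Type*} [Fintype S] [Fintype A] [Nonempty S] [Nonempty A]

set_option linter.unusedSectionVars false in
private lemma abs_le_supNormQ' (Q : S → A → ℝ) (s : S) (a : A) : |Q s a| ≤ supNormQ Q :=
  le_ciSup (f := fun x : S × A => |Q x.1 x.2|) (Set.finite_range _).bddAbove ⟨s, a⟩

private lemma supNormQ_nonneg' (Q : S → A → ℝ) : 0 ≤ supNormQ Q :=
  le_trans (abs_nonneg _) (abs_le_supNormQ' Q (Classical.arbitrary S) (Classical.arbitrary A))

set_option linter.unusedSectionVars false in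
private lemma supNormQ_le' (Q : S → A → ℝ) (c : ℝ) (h : ∀ s a, |Q s a| ≤ c) : supNormQ Q ≤ c :=
  ciSup_le fun x => h x.1 x.2

set_option linter.unusedSectionVars false in
private lemma dot_le_dot (μ : A → ℝ) (hμ : μ ∈ stdSimplex ℝ A)
    (x y : A → ℝ) (c : ℝ) (h : ∀ a, x a ≤ y a + c) :
    ∑ a, μ a * x a ≤ (∑ a, μ a * y a) + c := by
  have h1 : ∑ a, μ a * x a ≤ ∑ a, (μ a * y a + μ a * c) := by
    refine Finset.sum_le_sum fun a _ => ?_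
    have h2 := mul_le_mul_of_nonneg_left (h a) (hμ.1 a)
    linarith
  rw [Finset.sum_add_distrib, ← Finset.sum_mul, hμ.2, one_mul] at h1
  exact h1

set_option linter.unusedSectionVars false in
private lemma dot_ge_dot (μ : A → ℝ) (hμ : μ ∈ stdSimplex ℝ A)
    (x y : A → ℝ) (c : ℝ) (h : ∀ a, y a + c ≤ x a) :
    (∑ a, μ a * y a) + c ≤ ∑ a, μ a * x a := by
  have h1 := dot_le_dot μ hμ y x (-c) (fun a => by linarith [h a])
  linarith

set_option linter.unusedSectionVars false in
private lemma dot_le_const (μ : A → ℝ) (hμ : μ ∈ stdSimplex ℝ A)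
    (x : A → ℝ) (c : ℝ) (h : ∀ a, x a ≤ c) : ∑ a, μ a * x a ≤ c := by
  have h1 := dot_le_dot μ hμ x (fun _ => 0) c (fun a => by simpa using h a)
  simpa using h1

set_option linter.unusedSectionVars false in
private lemma psum_le (p : S → ℝ) (hp : p ∈ stdSimplex ℝ S)
    (x : S → ℝ) (c : ℝ) (h : ∀ s, p s ≠ 0 → x s ≤ c) : ∑ s, p s * x s ≤ c := by
  have h1 : ∑ s, p s * x s ≤ ∑ s, p s * c := by
    refine Finset.sum_le_sum fun s _ => ?_
    by_cases hz : p s = 0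
    · simp [hz]
    · exact mul_le_mul_of_nonneg_left (h s hz) (hp.1 s)
  rwa [← Finset.sum_mul, hp.2, one_mul] at h1

set_option linter.unusedSectionVars false in
private lemma psum_ge (p : S → ℝ) (hp : p ∈ stdSimplex ℝ S)
    (x : S → ℝ) (c : ℝ) (h : ∀ s, p s ≠ 0 → c ≤ x s) : c ≤ ∑ s, p s * x s := by
  have h1 : ∑ s, p s * c ≤ ∑ s, p s * x s := by
    refine Finset.sum_le_sum fun s _ => ?_
    by_cases hz : p s = 0
    · simp [hz]
    · exact mul_le_mul_of_nonneg_left (h s hz) (hp.1 s)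
  rwa [← Finset.sum_mul, hp.2, one_mul] at h1

set_option linter.unusedSectionVars false in
private lemma sum_cancel {p : S → ℝ} (hp : p ∈ stdSimplex ℝ S)
    {f g : S → ℝ} (hfg : ∀ s, g s ≤ f s)
    (hsum : ∑ s, p s * g s = ∑ s, p s * f s) {s' : S} (hs' : p s' ≠ 0) : f s' = g s' := by
  have h0 : ∑ s, p s * (f s - g s) = 0 := by
    simp only [mul_sub]
    rw [Finset.sum_sub_distrib, hsum, sub_self]
  have h1 := (Finset.sum_eq_zero_iff_of_nonneg (fun s _ =>
    mul_nonneg (hp.1 s) (sub_nonneg.mpr (hfg s)))).mp h0 s' (Finset.mem_univ s')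
  rcases mul_eq_zero.mp h1 with h | h
  · exact absurd h hs'
  · exact sub_eq_zero.mp h

set_option maxHeartbeats 1000000 in
/-- **Almost contractive recursion for approximate DSPI** (Lemma 8). -/
theorem approx_dspi_almost_contraction
    (M : MDP S A)
    (ν : (A → ℝ) → ℝ)
    (hν_cont : ContinuousOn ν (stdSimplex ℝ A))
    (hν_nonneg : ∀ μ ∈ stdSimplex ℝ A, 0 ≤ ν μ)
    (hν_conc : ConcaveOn ℝ (stdSimplex ℝ A) ν)
    (τ : ℝ) (hτ : 0 ≤ τ)
    (ε : ℝ) (hε : 0 ≤ ε)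
    (b : ℝ) (hb : b ∈ Set.Ioc (0 : ℝ) 1)
    (β : ℕ → ℝ) (hβ0 : β 0 = 1) (hβ : ∀ k ≥ 1, β k = b)
    (D : ApproxDSPISeq M ν τ β ε)
    (Qstar : S → A → ℝ) (hQstar : bellmanOpt M Qstar = Qstar) :
    ∀ k ≥ 1,
      supNormQ (Qstar - D.Wbar (k + 1))
        ≤ (1 - b * (1 - M.γ)) * supNormQ (Qstar - D.Wbar k)
          + b * M.γ * nuMax ν * (τ * (1 - b) ^ (k - 1))
          + b * M.γ * (((1 + M.γ) / (1 - M.γ)) * ε * ∑ i ∈ Finset.range k, (1 - b) ^ i)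
          + b * ε := by
  classical
  obtain ⟨hb0, hb1⟩ := hb
  obtain ⟨hγ0, hγ1⟩ := M.hγ
  have hγ1' : (0:ℝ) < 1 - M.γ := by linarith
  have hb' : (0:ℝ) ≤ 1 - b := by linarith
  -- pointwise recursions
  have hWrec : ∀ k s a, D.Wbar (k+1) s a = (1 - β k) * D.Wbar k s a + β k * D.W k s a := by
    intro k s a
    have h := congrFun (congrFun (D.hWbarSucc k) s) a
    simpa using h
  have hfix : ∀ k s a, D.Qpi k s a
      = M.R s a + M.γ * ∑ s', M.p s a s' * ∑ a', D.pol k s' a' * D.Qpi k s' a' :=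
    fun k s a => (congrFun (congrFun (D.hQpi k) s) a).symm
  have hWa : ∀ k s a, |D.W k s a - D.Qpi k s a| ≤ ε := by
    intro k s a
    have h1 : |(D.W k - D.Qpi k) s a| ≤ supNormQ (D.W k - D.Qpi k) := abs_le_supNormQ' _ s a
    simpa using h1.trans (D.hW k)
  have hνmax : ∀ μ ∈ stdSimplex ℝ A, ν μ ≤ nuMax ν := fun μ hμ =>
    le_csSup ((isCompact_stdSimplex ℝ A).image_of_continuousOn hν_cont).bddAbove ⟨μ, hμ, rfl⟩
  have hνmax0 : 0 ≤ nuMax ν := by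
    have h := D.hpol 0 (Classical.arbitrary S)
    exact le_trans (hν_nonneg _ h) (hνmax _ h)
  have heta : ∀ k, eta τ β k = τ * (1 - b) ^ k := by
    intro k
    unfold eta
    congr 1
    rw [Finset.prod_congr rfl (fun j hj => by rw [hβ j (Finset.mem_Icc.mp hj).1]),
      Finset.prod_const, Nat.card_Icc]
    simp
  have hetapos : ∀ k, 0 ≤ eta τ β k := by
    intro k
    rw [heta]
    exact mul_nonneg hτ (pow_nonneg hb' k)
  -- bddAbove of the smoothed maximization
  have hbdd : ∀ (Q : S → A → ℝ) (η : ℝ), 0 ≤ η → ∀ s',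
      BddAbove (Set.range fun μ : stdSimplex ℝ A =>
        ∑ a', μ.1 a' * Q s' a' + η * ν μ.1) := by
    intro Q η hη s'
    refine ⟨(∑ a', |Q s' a'|) + η * nuMax ν, ?_⟩
    rintro x ⟨μ, rfl⟩
    have h1 : ∑ a', μ.1 a' * Q s' a' ≤ ∑ a', |Q s' a'| := by
      refine Finset.sum_le_sum fun a _ => ?_
      have hμ1 : μ.1 a ≤ 1 := by
        have h := Finset.single_le_sum (f := μ.1) (fun i _ => μ.2.1 i) (Finset.mem_univ a)
        rw [μ.2.2] at h
        exact h
      calc μ.1 a * Q s' a ≤ μ.1 a * |Q s' a| :=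
            mul_le_mul_of_nonneg_left (le_abs_self _) (μ.2.1 a)
        _ ≤ 1 * |Q s' a| := mul_le_mul_of_nonneg_right hμ1 (abs_nonneg _)
        _ = |Q s' a| := one_mul _
    exact add_le_add h1 (mul_le_mul_of_nonneg_left (hνmax _ μ.2) hη)
  -- greedy value property at reachable states
  have hval : ∀ k s', (∃ s a, M.p s a s' ≠ 0) → ∀ μ ∈ stdSimplex ℝ A,
      ∑ a', μ a' * D.Wbar (k+1) s' a' + eta τ β k * ν μ
        ≤ ∑ a', D.pol (k+1) s' a' * D.Wbar (k+1) s' a' + eta τ β k * ν (D.pol (k+1) s') := by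
    rintro k s' ⟨s, a, hps⟩ μ hμ
    have hbd := hbdd (D.Wbar (k+1)) (eta τ β k) (hetapos k)
    have hGF : ∀ s'', (∑ a', D.pol (k+1) s'' a' * D.Wbar (k+1) s'' a'
        + eta τ β k * ν (D.pol (k+1) s''))
        ≤ ⨆ μ' : stdSimplex ℝ A,
            (∑ a', μ'.1 a' * D.Wbar (k+1) s'' a' + eta τ β k * ν μ'.1) := fun s'' =>
      le_ciSup (f := fun μ' : stdSimplex ℝ A =>
        ∑ a', μ'.1 a' * D.Wbar (k+1) s'' a' + eta τ β k * ν μ'.1)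
        (hbd s'') ⟨_, D.hpol (k+1) s''⟩
    have hg := congrFun (congrFun (D.hgreedy k) s) a
    simp only [smoothedPol, smoothedOpt] at hg
    have h1 := mul_left_cancel₀ (ne_of_gt hγ0) (add_left_cancel hg)
    have hFG := sum_cancel (M.hp s a) hGF h1 hps
    calc ∑ a', μ a' * D.Wbar (k+1) s' a' + eta τ β k * ν μ
        ≤ ⨆ μ' : stdSimplex ℝ A,
            (∑ a', μ'.1 a' * D.Wbar (k+1) s' a' + eta τ β k * ν μ'.1) :=
          le_ciSup (f := fun μ' : stdSimplex ℝ A =>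
            ∑ a', μ'.1 a' * D.Wbar (k+1) s' a' + eta τ β k * ν μ'.1) (hbd s') ⟨μ, hμ⟩
      _ = _ := hFG
  -- dual averaging: new policy dominates old on W i at reachable states
  have hC : ∀ i s', (∃ s a, M.p s a s' ≠ 0) →
      ∑ a', D.pol i s' a' * D.W i s' a' ≤ ∑ a', D.pol (i+1) s' a' * D.W i s' a' := by
    intro i s' hre
    match i with
    | 0 =>
      have hW1 : ∀ a', D.Wbar 1 s' a' = D.W 0 s' a' := fun a' => by
        rw [hWrec, hβ0]; ring
      have h1 := hval 0 s' hre (D.pol 0 s') (D.hpol 0 s')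
      have he0 : eta τ β 0 = τ := by rw [heta]; simp
      rw [he0] at h1
      have h2 : τ * ν (D.pol 1 s') ≤ τ * ν (D.pol 0 s') :=
        mul_le_mul_of_nonneg_left (D.hpol0 s' _ (D.hpol 1 s')) hτ
      have h3 : ∀ (π : A → ℝ), ∑ a', π a' * D.Wbar 1 s' a' = ∑ a', π a' * D.W 0 s' a' :=
        fun π => Finset.sum_congr rfl fun a' _ => by rw [hW1]
      rw [h3, h3] at h1
      linarith
    | Nat.succ m =>
      have h1 := hval (m+1) s' hre (D.pol (m+1) s') (D.hpol (m+1) s')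
      have h2 := hval m s' hre (D.pol (m+1+1) s') (D.hpol (m+1+1) s')
      have hexp : ∀ (π : A → ℝ), ∑ a', π a' * D.Wbar (m+1+1) s' a'
          = (1-b) * ∑ a', π a' * D.Wbar (m+1) s' a'
            + b * ∑ a', π a' * D.W (m+1) s' a' := by
        intro π
        rw [Finset.mul_sum, Finset.mul_sum, ← Finset.sum_add_distrib]
        refine Finset.sum_congr rfl fun a' _ => ?_
        rw [hWrec, hβ (m+1) (by omega)]
        ring
      have hη : eta τ β (m+1) = (1-b) * eta τ β m := by rw [heta, heta]; ring
      rw [hexp, hexp, hη] at h1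
      have h2' := mul_le_mul_of_nonneg_left h2 hb'
      have hkey : b * ∑ a', D.pol (m+1) s' a' * D.W (m+1) s' a'
          ≤ b * ∑ a', D.pol (m+1+1) s' a' * D.W (m+1) s' a' := by nlinarith [h1, h2']
      exact le_of_mul_le_mul_left hkey hb0
  -- approximate policy improvement
  have hD : ∀ i s a, D.Qpi i s a - 2 * M.γ * ε / (1 - M.γ) ≤ D.Qpi (i+1) s a := by
    intro i
    obtain ⟨⟨s₀, a₀⟩, hmin⟩ := Finite.exists_min
      (fun x : S × A => D.Qpi (i+1) x.1 x.2 - D.Qpi i x.1 x.2)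
    set m := D.Qpi (i+1) s₀ a₀ - D.Qpi i s₀ a₀ with hm
    have hmin' : ∀ s a, m ≤ D.Qpi (i+1) s a - D.Qpi i s a := fun s a => hmin (s, a)
    have key : M.γ * (m - 2*ε) ≤ m := by
      have hbr : ∀ s', M.p s₀ a₀ s' ≠ 0 →
          m - 2*ε ≤ (∑ a', D.pol (i+1) s' a' * D.Qpi (i+1) s' a')
            - ∑ a', D.pol i s' a' * D.Qpi i s' a' := by
        intro s' hps
        have e1 : (∑ a', D.pol (i+1) s' a' * D.Qpi i s' a') + m
            ≤ ∑ a', D.pol (i+1) s' a' * D.Qpi (i+1) s' a' :=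
          dot_ge_dot _ (D.hpol (i+1) s') _ _ m (fun a' => by linarith [hmin' s' a'])
        have e2 : (∑ a', D.pol (i+1) s' a' * D.W i s' a') + (-ε)
            ≤ ∑ a', D.pol (i+1) s' a' * D.Qpi i s' a' :=
          dot_ge_dot _ (D.hpol (i+1) s') _ _ (-ε) (fun a' => by
            have h := hWa i s' a'; rw [abs_le] at h; linarith [h.2])
        have e3 := hC i s' ⟨s₀, a₀, hps⟩
        have e4 : (∑ a', D.pol i s' a' * D.Qpi i s' a') + (-ε)
            ≤ ∑ a', D.pol i s' a' * D.W i s' a' :=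
          dot_ge_dot _ (D.hpol i s') _ _ (-ε) (fun a' => by
            have h := hWa i s' a'; rw [abs_le] at h; linarith [h.1])
        linarith
      have hQdiff : D.Qpi (i+1) s₀ a₀ - D.Qpi i s₀ a₀
          = M.γ * ∑ s', M.p s₀ a₀ s' * ((∑ a', D.pol (i+1) s' a' * D.Qpi (i+1) s' a')
              - ∑ a', D.pol i s' a' * D.Qpi i s' a') := by
        rw [hfix (i+1) s₀ a₀, hfix i s₀ a₀]
        simp only [mul_sub, Finset.sum_sub_distrib]
        ring
      have hsum := mul_le_mul_of_nonneg_left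
        (psum_ge (M.p s₀ a₀) (M.hp s₀ a₀) _ _ hbr) (le_of_lt hγ0)
      rw [← hQdiff] at hsum
      exact hsum
    have hmge : -(2 * M.γ * ε / (1 - M.γ)) ≤ m := by
      rw [← neg_div, div_le_iff₀ hγ1']
      nlinarith [key]
    intro s a
    linarith [hmin' s a, hmge]
  have hL : (0:ℝ) ≤ 2 * M.γ * ε / (1 - M.γ) := by positivity
  have hδfact : ((1 + M.γ) / (1 - M.γ)) * ε = ε + 2 * M.γ * ε / (1 - M.γ) := by
    field_simp
    ring
  -- one-sided drift bound
  have hE : ∀ k, 1 ≤ k → ∀ s a,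
      D.Wbar k s a ≤ D.Qpi k s a
        + ((1 + M.γ)/(1 - M.γ)) * ε * ∑ i ∈ Finset.range k, (1-b)^i := by
    intro k hk
    induction k, hk using Nat.le_induction with
    | base =>
      intro s a
      have h1 : D.Wbar 1 s a = D.W 0 s a := by rw [hWrec, hβ0]; ring
      have h2 := hWa 0 s a
      rw [abs_le] at h2
      have h3 := hD 0 s a
      simp only [Finset.range_one, Finset.sum_singleton, pow_zero, mul_one]
      rw [h1, hδfact]
      linarith [h2.2, h3]
    | succ k hk ih =>
      intro s a
      have h1 := hWrec k s a
      rw [hβ k hk] at h1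
      have h2 := ih s a
      rw [hδfact] at h2
      have h3 := hWa k s a
      rw [abs_le] at h3
      have h4 := hD k s a
      have hT : ∑ i ∈ Finset.range (k+1), (1-b)^i
          = 1 + (1-b) * ∑ i ∈ Finset.range k, (1-b)^i := by
        rw [geom_sum_succ]
        ring
      rw [h1, hT, hδfact]
      have hTnn : (0:ℝ) ≤ ∑ i ∈ Finset.range k, (1-b)^i :=
        Finset.sum_nonneg fun i _ => pow_nonneg hb' i
      nlinarith [mul_le_mul_of_nonneg_left h2 hb',
        mul_le_mul_of_nonneg_left h3.2 (le_of_lt hb0), h4, mul_nonneg hb' hε]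
  -- Q* dominates every Q^π
  have hQs : ∀ s a, Qstar s a = M.R s a + M.γ * ∑ s', M.p s a s' * (⨆ a', Qstar s' a') :=
    fun s a => (congrFun (congrFun hQstar s) a).symm
  have hstar : ∀ k s a, D.Qpi k s a ≤ Qstar s a := by
    intro k
    obtain ⟨⟨s₀, a₀⟩, hmin⟩ := Finite.exists_min
      (fun x : S × A => Qstar x.1 x.2 - D.Qpi k x.1 x.2)
    set m := Qstar s₀ a₀ - D.Qpi k s₀ a₀ with hm
    have key : M.γ * m ≤ m := by
      have hbr : ∀ s', M.p s₀ a₀ s' ≠ 0 →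
          m ≤ (⨆ a', Qstar s' a') - ∑ a', D.pol k s' a' * D.Qpi k s' a' := by
        intro s' _
        have e1 : (∑ a', D.pol k s' a' * D.Qpi k s' a') + m
            ≤ ∑ a', D.pol k s' a' * Qstar s' a' :=
          dot_ge_dot _ (D.hpol k s') _ _ m (fun a' => by linarith [hmin (s', a')])
        have e2 : ∑ a', D.pol k s' a' * Qstar s' a' ≤ ⨆ a', Qstar s' a' :=
          dot_le_const _ (D.hpol k s') _ _
            (fun a' => le_ciSup (Set.finite_range _).bddAbove a')
        linarith
      have hQdiff : Qstar s₀ a₀ - D.Qpi k s₀ a₀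
          = M.γ * ∑ s', M.p s₀ a₀ s' * ((⨆ a', Qstar s' a')
              - ∑ a', D.pol k s' a' * D.Qpi k s' a') := by
        rw [hQs s₀ a₀, hfix k s₀ a₀]
        simp only [mul_sub, Finset.sum_sub_distrib]
        ring
      have hsum := mul_le_mul_of_nonneg_left
        (psum_ge (M.p s₀ a₀) (M.hp s₀ a₀) _ _ hbr) (le_of_lt hγ0)
      rw [← hQdiff] at hsum
      exact hsum
    have hm0 : 0 ≤ m := by nlinarith [key]
    intro s a
    linarith [hmin (s, a), hm0]
  -- final assembly
  intro k hk
  obtain ⟨n, rfl⟩ : ∃ n, k = n + 1 := ⟨k - 1, (Nat.succ_pred_eq_of_pos hk).symm⟩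
  simp only [Nat.add_sub_cancel]
  set N := supNormQ (Qstar - D.Wbar (n+1)) with hN
  set δ := ((1 + M.γ)/(1 - M.γ)) * ε * ∑ i ∈ Finset.range (n+1), (1-b)^i with hδ
  set η' := τ * (1-b)^n with hη'
  have hNnn : 0 ≤ N := supNormQ_nonneg' _
  have hδnn : 0 ≤ δ := by
    rw [hδ]
    apply mul_nonneg (mul_nonneg (div_nonneg (by linarith) (by linarith)) hε)
    exact Finset.sum_nonneg fun i _ => pow_nonneg hb' i
  have hη'nn : 0 ≤ η' := mul_nonneg hτ (pow_nonneg hb' n)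
  have habsN : ∀ s a, |Qstar s a - D.Wbar (n+1) s a| ≤ N := by
    intro s a
    have h := abs_le_supNormQ' (Qstar - D.Wbar (n+1)) s a
    rw [hN]
    simpa using h
  set C := N + nuMax ν * η' + δ with hC2
  have hCnn : 0 ≤ C := by
    rw [hC2]
    have := mul_nonneg hνmax0 hη'nn
    linarith
  have hcore : ∀ s a, |Qstar s a - D.Qpi (n+1) s a| ≤ M.γ * C := by
    intro s a
    rw [abs_le]
    constructor
    · have h1 := hstar (n+1) s a
      have h2 : 0 ≤ M.γ * C := mul_nonneg (le_of_lt hγ0) hCnn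
      linarith
    · have hbr : ∀ s', M.p s a s' ≠ 0 →
          (⨆ a', Qstar s' a') - ∑ a', D.pol (n+1) s' a' * D.Qpi (n+1) s' a' ≤ C := by
        intro s' hps
        have e1 : (⨆ a', Qstar s' a') ≤ (⨆ a', D.Wbar (n+1) s' a') + N := by
          apply ciSup_le
          intro a'
          have h1 := habsN s' a'
          rw [abs_le] at h1
          have h2 : D.Wbar (n+1) s' a' ≤ ⨆ a'', D.Wbar (n+1) s' a'' :=
            le_ciSup (Set.finite_range _).bddAbove a'
          linarith [h1.2]
        have e2 : (⨆ a', D.Wbar (n+1) s' a')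
            ≤ (∑ a', D.pol (n+1) s' a' * D.Wbar (n+1) s' a') + η' * nuMax ν := by
          apply ciSup_le
          intro a'
          have hd := hval n s' ⟨s, a, hps⟩ ((Pi.single a' 1 : A → ℝ)) (single_mem_stdSimplex ℝ a')
          have hdd : ∑ a'', (Pi.single a' 1 : A → ℝ) a'' * D.Wbar (n+1) s' a''
              = D.Wbar (n+1) s' a' := by
            simp [Pi.single_apply, ite_mul]
          rw [hdd] at hd
          have h3 : 0 ≤ eta τ β n * ν (Pi.single a' 1) :=
            mul_nonneg (hetapos n) (hν_nonneg _ (single_mem_stdSimplex ℝ a'))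
          have h4 : eta τ β n * ν (D.pol (n+1) s') ≤ η' * nuMax ν := by
            rw [hη', ← heta n]
            exact mul_le_mul_of_nonneg_left (hνmax _ (D.hpol (n+1) s')) (hetapos n)
          linarith
        have e3 : (∑ a', D.pol (n+1) s' a' * D.Wbar (n+1) s' a')
            ≤ (∑ a', D.pol (n+1) s' a' * D.Qpi (n+1) s' a') + δ :=
          dot_le_dot _ (D.hpol (n+1) s') _ _ δ (fun a' => by
            have := hE (n+1) (by omega) s' a'
            rw [← hδ] at this
            exact this)
        rw [hC2]
        linarith
      have hQdiff : Qstar s a - D.Qpi (n+1) s a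
          = M.γ * ∑ s', M.p s a s' * ((⨆ a', Qstar s' a')
              - ∑ a', D.pol (n+1) s' a' * D.Qpi (n+1) s' a') := by
        rw [hQs s a, hfix (n+1) s a]
        simp only [mul_sub, Finset.sum_sub_distrib]
        ring
      rw [hQdiff]
      exact mul_le_mul_of_nonneg_left (psum_le (M.p s a) (M.hp s a) _ _ hbr) (le_of_lt hγ0)
  refine supNormQ_le' _ _ ?_
  intro s a
  have h2 := hWrec (n+1) s a
  rw [hβ (n+1) (by omega)] at h2
  have h3 := habsN s a
  rw [abs_le] at h3
  have h4 := hcore s a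
  rw [abs_le, hC2] at h4
  have h5 := hWa (n+1) s a
  rw [abs_le] at h5
  have h6 : (Qstar - D.Wbar (n+1+1)) s a
      = (1-b) * (Qstar s a - D.Wbar (n+1) s a) + b * (Qstar s a - D.Qpi (n+1) s a)
        + b * (D.Qpi (n+1) s a - D.W (n+1) s a) := by
    simp only [Pi.sub_apply]
    rw [h2]
    ring
  rw [h6, abs_le]
  have k1 := mul_le_mul_of_nonneg_left h3.2 hb'
  have k1' := mul_le_mul_of_nonneg_left h3.1 hb'
  have k2 := mul_le_mul_of_nonneg_left h4.2 (le_of_lt hb0)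
  have k2' := mul_le_mul_of_nonneg_left h4.1 (le_of_lt hb0)
  have k3 := mul_le_mul_of_nonneg_left h5.2 (le_of_lt hb0)
  have k3' := mul_le_mul_of_nonneg_left h5.1 (le_of_lt hb0)
  constructor <;> nlinarith [k1, k1', k2, k2', k3, k3']
end
end
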